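/- arXiv:1911.08983 — 4 statements merged into one kernel-verified Lean document; each statement's English description precedes it below -/
import Mathlib

section
/- The polynomial space B_1 = {(β₁ + β₄ r + β₃ z - β₆ r z, -n β₁ + β₂ r - n β₃ z, β₅ r + β₆ r²) : β_i ∈ ℝ} is mapped by curl^n_{rz} into the space C_1 = {(n γ₁ + γ₂ r, γ₁ + γ₃ r, γ₄ + γ₂ z) : γ_i ∈ ℝ}. -/
noncomputable def pdr (f : ℝ × ℝ → ℝ) (p : ℝ × ℝ) : ℝ := fderiv ℝ f p (1, 0)
noncomputable def pdz (f : ℝ × ℝ → ℝ) (p : ℝ × ℝ) : ℝ := fderiv ℝ f p (0, 1)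

/-- `curl^n_{rz}(u_r,u_θ,u_z)`. -/
noncomputable def curlN (n : ℤ) (ur uθ uz : ℝ × ℝ → ℝ) (p : ℝ × ℝ) : ℝ × ℝ × ℝ :=
  (-(((n : ℝ) / p.1) * uz p + pdz uθ p),
   pdz ur p - pdr uz p,
   ((n : ℝ) * ur p + uθ p) / p.1 + pdr uθ p)

lemma hasF (a b c d e : ℝ) (p : ℝ × ℝ) :
    HasFDerivAt (fun q : ℝ × ℝ => a + b * q.1 + c * q.2 + d * (q.1 * q.2) + e * q.1 ^ 2)
      ((b • ContinuousLinearMap.fst ℝ ℝ ℝ + c • ContinuousLinearMap.snd ℝ ℝ ℝ) +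
        d • (p.1 • ContinuousLinearMap.snd ℝ ℝ ℝ + p.2 • ContinuousLinearMap.fst ℝ ℝ ℝ) +
        e • (p.1 • ContinuousLinearMap.fst ℝ ℝ ℝ + p.1 • ContinuousLinearMap.fst ℝ ℝ ℝ)) p := by
  have hfe : (fun q : ℝ × ℝ => a + b * q.1 + c * q.2 + d * (q.1 * q.2) + e * q.1 ^ 2)
      = fun q : ℝ × ℝ => a + b * q.1 + c * q.2 + d * (q.1 * q.2) + e * (q.1 * q.1) := by
    funext q; ring
  rw [hfe]
  have h1 : HasFDerivAt (fun q : ℝ × ℝ => q.1) (ContinuousLinearMap.fst ℝ ℝ ℝ) p := hasFDerivAt_fst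
  have h2 : HasFDerivAt (fun q : ℝ × ℝ => q.2) (ContinuousLinearMap.snd ℝ ℝ ℝ) p := hasFDerivAt_snd
  have := (((hasFDerivAt_const a p).add (h1.const_mul b)).add (h2.const_mul c)).add
    ((h1.mul h2).const_mul d) |>.add ((h1.mul h1).const_mul e)
  refine HasFDerivAt.congr_fderiv this ?_
  ext v <;> simp <;> ring

lemma pdr_poly (a b c d e : ℝ) (p : ℝ × ℝ) :
    pdr (fun q : ℝ × ℝ => a + b * q.1 + c * q.2 + d * (q.1 * q.2) + e * q.1 ^ 2) p
      = b + d * p.2 + e * (2 * p.1) := by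
  rw [pdr, (hasF a b c d e p).fderiv]; simp; ring

lemma pdz_poly (a b c d e : ℝ) (p : ℝ × ℝ) :
    pdz (fun q : ℝ × ℝ => a + b * q.1 + c * q.2 + d * (q.1 * q.2) + e * q.1 ^ 2) p
      = c + d * p.1 := by
  rw [pdz, (hasF a b c d e p).fderiv]; simp

/-- `curl^n_{rz}` maps `B₁ = {(β₁ + β₄ r + β₃ z - β₆ r z, -n β₁ + β₂ r - n β₃ z,
β₅ r + β₆ r²)}` into `C₁ = {(n γ₁ + γ₂ r, γ₁ + γ₃ r, γ₄ + γ₂ z)}`. -/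
theorem curlN_B1_mem_C1 (n : ℤ) (hn : n ≠ 0) (β₁ β₂ β₃ β₄ β₅ β₆ : ℝ)
    (ur uθ uz : ℝ × ℝ → ℝ)
    (hur : ∀ p : ℝ × ℝ, ur p = β₁ + β₄ * p.1 + β₃ * p.2 - β₆ * p.1 * p.2)
    (huθ : ∀ p : ℝ × ℝ, uθ p = -(n : ℝ) * β₁ + β₂ * p.1 - (n : ℝ) * β₃ * p.2)
    (huz : ∀ p : ℝ × ℝ, uz p = β₅ * p.1 + β₆ * p.1 ^ 2) :
    ∃ γ₁ γ₂ γ₃ γ₄ : ℝ, ∀ p : ℝ × ℝ, p.1 ≠ 0 →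
      curlN n ur uθ uz p =
        ((n : ℝ) * γ₁ + γ₂ * p.1, γ₁ + γ₃ * p.1, γ₄ + γ₂ * p.2) := by
  have hur' : ur = fun q : ℝ × ℝ =>
      β₁ + β₄ * q.1 + β₃ * q.2 + (-β₆) * (q.1 * q.2) + 0 * q.1 ^ 2 := by
    funext q; rw [hur q]; ring
  have huθ' : uθ = fun q : ℝ × ℝ =>
      (-(n : ℝ) * β₁) + β₂ * q.1 + (-(n : ℝ) * β₃) * q.2 + 0 * (q.1 * q.2) + 0 * q.1 ^ 2 := by
    funext q; rw [huθ q]; ring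
  have huz' : uz = fun q : ℝ × ℝ =>
      0 + β₅ * q.1 + 0 * q.2 + 0 * (q.1 * q.2) + β₆ * q.1 ^ 2 := by
    funext q; rw [huz q]; ring
  refine ⟨β₃ - β₅, -(n : ℝ) * β₆, -3 * β₆, (n : ℝ) * β₄ + 2 * β₂, fun p hp => ?_⟩
  have e1 := pdz_poly (-(n : ℝ) * β₁) β₂ (-(n : ℝ) * β₃) 0 0 p
  have e2 := pdz_poly β₁ β₄ β₃ (-β₆) 0 p
  have e3 := pdr_poly 0 β₅ 0 0 β₆ p
  have e4 := pdr_poly (-(n : ℝ) * β₁) β₂ (-(n : ℝ) * β₃) 0 0 p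
  simp only [curlN, hur', huθ', huz', e1, e2, e3, e4, hur p, huθ p, huz p]
  refine Prod.ext ?_ (Prod.ext ?_ ?_) <;> simp only [] <;> field_simp <;> ring
end

section
/- Let D be a disk of radius ρ centered at a point a with distance at least ρ from the z-axis, in the half-plane {r ≥ 0}, and suppose η : D → ℝ satisfies ∫_D r(y)³ η(y) p(y) dy = p(a) for all polynomials p of degree at most l. Then ∫_D r(y)³ |η(y)| dy ≤ C, where C depends only on l and an upper bound for the ratio max_{y∈D} r(y) / min_{y∈D} r(y) (which is at most 3 here), via the Cauchy–Schwarz bound ∫_D r³|η| dy ≤ ‖r^{3/2}η‖_{L²(D)} · (∫_D r³ dy)^{1/2} combined with the estimate ‖r^{3/2}η‖²_{L²(D)} ≤ C/(ρ² r_a³) with r_a = min_{y∈D} r(y). -/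
open MeasureTheory

/-- `f` is a real polynomial in `(r,z)` of total degree at most `l`. -/
def IsPolyDeg (l : ℕ) (f : ℝ × ℝ → ℝ) : Prop :=
  ∃ P : MvPolynomial (Fin 2) ℝ, P.totalDegree ≤ l ∧
    ∀ p : ℝ × ℝ, f p = MvPolynomial.eval ![p.1, p.2] P

namespace WRK

open MvPolynomial

/-- The disk. -/
def Dset (a : ℝ × ℝ) (ρ : ℝ) : Set (ℝ × ℝ) :=
  {p : ℝ × ℝ | (p.1 - a.1) ^ 2 + (p.2 - a.2) ^ 2 ≤ ρ ^ 2}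

lemma isClosed_Dset (a : ℝ × ℝ) (ρ : ℝ) : IsClosed (Dset a ρ) := by
  have : Continuous fun p : ℝ × ℝ => (p.1 - a.1) ^ 2 + (p.2 - a.2) ^ 2 := by fun_prop
  exact isClosed_le this continuous_const

lemma measurableSet_Dset (a : ℝ × ℝ) (ρ : ℝ) : MeasurableSet (Dset a ρ) :=
  (isClosed_Dset a ρ).measurableSet

lemma Dset_subset_prod (a : ℝ × ℝ) {ρ : ℝ} (hρ : 0 ≤ ρ) :
    Dset a ρ ⊆ Set.Icc (a.1 - ρ) (a.1 + ρ) ×ˢ Set.Icc (a.2 - ρ) (a.2 + ρ) := by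
  intro p hp
  have h : (p.1 - a.1) ^ 2 + (p.2 - a.2) ^ 2 ≤ ρ ^ 2 := hp
  constructor
  · constructor
    · nlinarith [sq_nonneg (p.2 - a.2), sq_nonneg (p.1 - a.1 + ρ)]
    · nlinarith [sq_nonneg (p.2 - a.2), sq_nonneg (p.1 - a.1 - ρ)]
  · constructor
    · nlinarith [sq_nonneg (p.1 - a.1), sq_nonneg (p.2 - a.2 + ρ)]
    · nlinarith [sq_nonneg (p.1 - a.1), sq_nonneg (p.2 - a.2 - ρ)]

lemma isCompact_Dset (a : ℝ × ℝ) {ρ : ℝ} (hρ : 0 ≤ ρ) : IsCompact (Dset a ρ) :=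
  ((isCompact_Icc.prod isCompact_Icc).of_isClosed_subset (isClosed_Dset a ρ)
    (Dset_subset_prod a hρ))

lemma volume_Dset_le (a : ℝ × ℝ) {ρ : ℝ} (hρ : 0 ≤ ρ) :
    volume (Dset a ρ) ≤ ENNReal.ofReal (2 * ρ) * ENNReal.ofReal (2 * ρ) := by
  calc volume (Dset a ρ)
      ≤ volume (Set.Icc (a.1 - ρ) (a.1 + ρ) ×ˢ Set.Icc (a.2 - ρ) (a.2 + ρ)) :=
        measure_mono (Dset_subset_prod a hρ)
    _ = ENNReal.ofReal (2 * ρ) * ENNReal.ofReal (2 * ρ) := by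
        rw [Measure.volume_eq_prod, Measure.prod_prod, Real.volume_Icc, Real.volume_Icc]
        ring_nf

lemma volume_Dset_lt_top (a : ℝ × ℝ) {ρ : ℝ} (hρ : 0 ≤ ρ) :
    volume (Dset a ρ) < ⊤ :=
  lt_of_le_of_lt (volume_Dset_le a hρ) (by finiteness)

lemma volume_Dset_toReal_le (a : ℝ × ℝ) {ρ : ℝ} (hρ : 0 ≤ ρ) :
    (volume (Dset a ρ)).toReal ≤ 4 * ρ ^ 2 := by
  have h := volume_Dset_le a hρ
  have h2 : (ENNReal.ofReal (2 * ρ) * ENNReal.ofReal (2 * ρ)).toReal = 4 * ρ ^ 2 := by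
    rw [ENNReal.toReal_mul, ENNReal.toReal_ofReal (by linarith)]
    ring
  calc (volume (Dset a ρ)).toReal
      ≤ (ENNReal.ofReal (2 * ρ) * ENNReal.ofReal (2 * ρ)).toReal :=
        ENNReal.toReal_mono (by finiteness) h
    _ = 4 * ρ ^ 2 := h2

lemma polyContinuous {l : ℕ} {f : ℝ × ℝ → ℝ} (hf : IsPolyDeg l f) : Continuous f := by
  obtain ⟨P, -, hP⟩ := hf
  have : f = (fun x : Fin 2 → ℝ => eval x P) ∘ (fun p : ℝ × ℝ => ![p.1, p.2]) := by
    funext p; exact hP p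
  rw [this]
  refine (MvPolynomial.continuous_eval P).comp ?_
  refine continuous_pi fun i => ?_
  fin_cases i
  · simpa using continuous_fst
  · simpa using continuous_snd

lemma totalDegree_bind₁_le (g : Fin 2 → MvPolynomial (Fin 2) ℝ)
    (hg : ∀ i, (g i).totalDegree ≤ 1) (P : MvPolynomial (Fin 2) ℝ) :
    (bind₁ g P).totalDegree ≤ P.totalDegree := by
  conv_lhs => rw [← support_sum_monomial_coeff P]
  rw [map_sum]
  refine (totalDegree_finset_sum _ _).trans (Finset.sup_le fun d hd => ?_)
  rw [bind₁_monomial]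
  calc (C (coeff d P) * ∏ i ∈ d.support, g i ^ d i).totalDegree
      ≤ (C (coeff d P)).totalDegree + (∏ i ∈ d.support, g i ^ d i).totalDegree :=
        totalDegree_mul _ _
    _ ≤ 0 + ∑ i ∈ d.support, (g i ^ d i).totalDegree := by
        gcongr
        · exact le_of_eq (totalDegree_C _)
        · exact totalDegree_finset_prod _ _
    _ ≤ ∑ i ∈ d.support, d i * 1 := by
        rw [zero_add]
        refine Finset.sum_le_sum fun i _ => ?_
        exact (totalDegree_pow _ _).trans (by gcongr; exact hg i)
    _ = d.sum fun _ e => e := by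
        simp [Finsupp.sum]
    _ ≤ P.totalDegree := le_totalDegree hd

lemma eval_bind₁' (x : Fin 2 → ℝ) (g : Fin 2 → MvPolynomial (Fin 2) ℝ)
    (P : MvPolynomial (Fin 2) ℝ) :
    eval x (bind₁ g P) = eval (fun i => eval x (g i)) P :=
  eval₂Hom_bind₁ _ _ _ _

lemma comp_affine {l : ℕ} {f : ℝ × ℝ → ℝ} (hf : IsPolyDeg l f)
    (a : ℝ × ℝ) (c : ℝ) : IsPolyDeg l (fun z => f (a + c • z)) := by
  obtain ⟨P, hdeg, hP⟩ := hf
  refine ⟨bind₁ (fun i => C (![a.1, a.2] i) + C c * X i) P, ?_, ?_⟩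
  · refine (totalDegree_bind₁_le _ (fun i => ?_) P).trans hdeg
    calc (C (![a.1, a.2] i) + C c * X i).totalDegree
        ≤ max (C (![a.1, a.2] i)).totalDegree (C c * X i).totalDegree := totalDegree_add _ _
      _ ≤ 1 := by
          refine max_le (by simp [totalDegree_C]) ?_
          refine (totalDegree_mul _ _).trans ?_
          simp [totalDegree_C, totalDegree_X]
  · intro z
    show f (a + c • z) = _
    rw [hP, eval_bind₁']
    have harg : ![(a + c • z).1, (a + c • z).2]
        = fun i => eval ![z.1, z.2] (C (![a.1, a.2] i) + C c * X i) := by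
      funext i
      fin_cases i <;> simp <;> ring
    rw [harg]

lemma zero_mem_Dset01 : (0 : ℝ × ℝ) ∈ Dset 0 1 := by
  simp [Dset]

lemma isOpen_Bopen : IsOpen {p : ℝ × ℝ | p.1 ^ 2 + p.2 ^ 2 < 1} :=
  isOpen_lt (by fun_prop) continuous_const

lemma Bopen_subset : {p : ℝ × ℝ | p.1 ^ 2 + p.2 ^ 2 < 1} ⊆ Dset 0 1 := by
  intro p hp
  simp only [Set.mem_setOf_eq] at hp
  show (p.1 - 0) ^ 2 + (p.2 - 0) ^ 2 ≤ 1 ^ 2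
  simpa using hp.le

lemma Dset01_subset_closure :
    Dset (0 : ℝ × ℝ) 1 ⊆ closure {p : ℝ × ℝ | p.1 ^ 2 + p.2 ^ 2 < 1} := by
  intro x hx
  have hx' : x.1 ^ 2 + x.2 ^ 2 ≤ 1 := by
    have : (x.1 - 0) ^ 2 + (x.2 - 0) ^ 2 ≤ 1 ^ 2 := hx
    simpa using this
  have h0 : Filter.Tendsto (fun n : ℕ => ((n : ℝ) + 1)⁻¹) Filter.atTop (nhds 0) := by
    simpa [one_div] using tendsto_one_div_add_atTop_nhds_zero_nat (𝕜 := ℝ)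
  have h1 : Filter.Tendsto (fun n : ℕ => (1 - ((n : ℝ) + 1)⁻¹)) Filter.atTop (nhds 1) := by
    simpa using (tendsto_const_nhds (x := (1:ℝ)) (f := Filter.atTop (α := ℕ))).sub h0
  have hseq : Filter.Tendsto (fun n : ℕ => (1 - ((n : ℝ) + 1)⁻¹) • x)
      Filter.atTop (nhds x) := by
    simpa using h1.smul_const x
  refine mem_closure_of_tendsto hseq (Filter.Eventually.of_forall fun n => ?_)
  have hpos : (0:ℝ) < (n : ℝ) + 1 := by positivity
  have hc0 : 0 ≤ 1 - ((n : ℝ) + 1)⁻¹ := by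
    have : ((n : ℝ) + 1)⁻¹ ≤ 1 := by
      rw [inv_le_one_iff₀]; right; linarith
    linarith
  have hc1 : 1 - ((n : ℝ) + 1)⁻¹ < 1 := by
    have : 0 < ((n : ℝ) + 1)⁻¹ := by positivity
    linarith
  show ((1 - ((n : ℝ) + 1)⁻¹) • x).1 ^ 2 + ((1 - ((n : ℝ) + 1)⁻¹) • x).2 ^ 2 < 1
  have e1 : ((1 - ((n : ℝ) + 1)⁻¹) • x).1 = (1 - ((n : ℝ) + 1)⁻¹) * x.1 := rfl
  have e2 : ((1 - ((n : ℝ) + 1)⁻¹) • x).2 = (1 - ((n : ℝ) + 1)⁻¹) * x.2 := rfl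
  rw [e1, e2]
  set c : ℝ := 1 - ((n : ℝ) + 1)⁻¹
  nlinarith [sq_nonneg x.1, sq_nonneg x.2, sq_nonneg c]

/-- Evaluation of polynomials as continuous functions on the closed unit disk. -/
lemma contcoords : Continuous fun x : ↥(Dset (0:ℝ×ℝ) 1) => ![x.1.1, x.1.2] := by
  refine continuous_pi fun i => ?_
  fin_cases i
  · exact continuous_fst.comp continuous_subtype_val
  · exact continuous_snd.comp continuous_subtype_val

noncomputable def T : MvPolynomial (Fin 2) ℝ →ₗ[ℝ] C(↥(Dset (0:ℝ×ℝ) 1), ℝ) where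
  toFun P := ⟨fun x => MvPolynomial.eval ![x.1.1, x.1.2] P,
    (MvPolynomial.continuous_eval P).comp contcoords⟩
  map_add' P Q := ContinuousMap.ext fun x => map_add (eval _) P Q
  map_smul' c P := ContinuousMap.ext fun x => by
    simpa using MvPolynomial.smul_eval _ P c

set_option maxHeartbeats 2000000 in
lemma core (l : ℕ) : ∃ C : ℝ, 0 < C ∧ ∀ f : ℝ × ℝ → ℝ, IsPolyDeg l f →
    f 0 ^ 2 ≤ C * ∫ p in Dset (0:ℝ×ℝ) 1, f p ^ 2 := by
  classical
  have hKmeas : MeasurableSet (Dset (0:ℝ×ℝ) 1) := measurableSet_Dset _ _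
  haveI : CompactSpace ↥(Dset (0:ℝ×ℝ) 1) :=
    isCompact_iff_compactSpace.mp (isCompact_Dset _ zero_le_one)
  set μK : Measure ↥(Dset (0:ℝ×ℝ) 1) := volume.comap Subtype.val with hμK
  have hemb : MeasurableEmbedding (Subtype.val : ↥(Dset (0:ℝ×ℝ) 1) → ℝ×ℝ) :=
    MeasurableEmbedding.subtype_coe hKmeas
  haveI : IsFiniteMeasure μK := by
    constructor
    rw [hμK, hemb.comap_apply, Subtype.coe_image_univ]
    exact volume_Dset_lt_top _ zero_le_one
  haveI : μK.IsOpenPosMeasure := by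
    constructor
    intro U hU hUne
    obtain ⟨O, hO, rfl⟩ := isOpen_induced_iff.mp hU
    rw [hμK, hemb.comap_apply, Subtype.image_preimage_coe]
    obtain ⟨x, hx⟩ := hUne
    have hxc : (x : ℝ×ℝ) ∈ closure {p : ℝ × ℝ | p.1 ^ 2 + p.2 ^ 2 < 1} :=
      Dset01_subset_closure x.2
    obtain ⟨y, hyB, hyO⟩ := mem_closure_iff.mp hxc O hO hx
    intro h0
    have hsub : O ∩ {p : ℝ × ℝ | p.1 ^ 2 + p.2 ^ 2 < 1} ⊆ Dset 0 1 ∩ O := fun p hp =>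
      ⟨Bopen_subset hp.2, hp.1⟩
    have hne : volume (O ∩ {p : ℝ × ℝ | p.1 ^ 2 + p.2 ^ 2 < 1}) ≠ 0 :=
      ((hO.inter isOpen_Bopen).measure_pos volume ⟨y, hyB, hyO⟩).ne'
    exact hne (measure_mono_null hsub h0)
  -- the finite-dimensional subspace of continuous functions
  set U : Submodule ℝ C(↥(Dset (0:ℝ×ℝ) 1), ℝ) :=
    (MvPolynomial.restrictTotalDegree (Fin 2) ℝ l).map T with hU
  haveI : Module.Finite ℝ ↥U := Module.Finite.map _ _
  set J : C(↥(Dset (0:ℝ×ℝ) 1), ℝ) →L[ℝ] Lp ℝ 2 μK := ContinuousMap.toLp 2 μK ℝ with hJ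
  set JU : ↥U →ₗ[ℝ] Lp ℝ 2 μK := J.toLinearMap.comp U.subtype with hJU
  have hinj : Function.Injective JU := by
    intro u v huv
    exact Subtype.ext (ContinuousMap.toLp_injective μK huv)
  let e := LinearEquiv.ofInjective JU hinj
  let Sinv := U.subtypeL.comp (LinearMap.toContinuousLinearMap e.symm.toLinearMap)
  refine ⟨‖Sinv‖ ^ 2 + 1, by positivity, ?_⟩
  intro f hf
  obtain ⟨P, hdeg, hP⟩ := hf
  set g : C(↥(Dset (0:ℝ×ℝ) 1), ℝ) := T P with hg
  have hgU : g ∈ U := ⟨P, (MvPolynomial.mem_restrictTotalDegree _ _ _).mpr hdeg, rfl⟩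
  set u : ↥U := ⟨g, hgU⟩ with hu
  have hgx : ∀ x : ↥(Dset (0:ℝ×ℝ) 1), g x = f (x : ℝ×ℝ) := by
    intro x
    rw [hP]
    rfl
  -- the L² identity
  have hL2 : ‖JU u‖ ^ 2 = ∫ p in Dset (0:ℝ×ℝ) 1, f p ^ 2 := by
    have h1 : JU u = ContinuousMap.toLp (E := ℝ) 2 μK ℝ g := rfl
    have hinner := ContinuousMap.inner_toLp (𝕜 := ℝ) μK g g
    rw [real_inner_self_eq_norm_sq] at hinner
    rw [h1, hinner]
    have : (fun x : ↥(Dset (0:ℝ×ℝ) 1) => g x * (starRingEnd ℝ) (g x))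
        = fun x : ↥(Dset (0:ℝ×ℝ) 1) => (fun p : ℝ×ℝ => f p ^ 2) (x : ℝ×ℝ) := by
      funext x
      simp [hgx x]
      ring
    rw [this, hμK]
    exact integral_subtype_comap (μ := volume) hKmeas (fun p => f p ^ 2)
  -- the norm comparison
  have hcomp : ‖g‖ ≤ ‖Sinv‖ * ‖JU u‖ := by
    have h1 : Sinv (e u) = g := by
      show ((e.symm (e u) : ↥U) : C(↥(Dset (0:ℝ×ℝ) 1), ℝ)) = g
      rw [e.symm_apply_apply]
    have h2 : ‖(e u : Lp ℝ 2 μK)‖ = ‖JU u‖ := by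
      congr 1
    calc ‖g‖ = ‖Sinv (e u)‖ := by rw [h1]
      _ ≤ ‖Sinv‖ * ‖e u‖ := Sinv.le_opNorm _
      _ = ‖Sinv‖ * ‖JU u‖ := by
          rw [show ‖e u‖ = ‖(e u : Lp ℝ 2 μK)‖ from rfl, h2]
  have hInt_nonneg : 0 ≤ ∫ p in Dset (0:ℝ×ℝ) 1, f p ^ 2 :=
    setIntegral_nonneg hKmeas fun p _ => sq_nonneg _
  have hpt : f 0 ^ 2 ≤ ‖g‖ ^ 2 := by
    have h0 : f 0 = g ⟨0, zero_mem_Dset01⟩ := by simpa using (hgx ⟨0, zero_mem_Dset01⟩).symm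
    rw [h0, ← sq_abs (g _)]
    have := ContinuousMap.norm_coe_le_norm g ⟨0, zero_mem_Dset01⟩
    rw [Real.norm_eq_abs] at this
    exact pow_le_pow_left₀ (abs_nonneg _) this 2
  calc f 0 ^ 2 ≤ ‖g‖ ^ 2 := hpt
    _ ≤ (‖Sinv‖ * ‖JU u‖) ^ 2 := pow_le_pow_left₀ (norm_nonneg _) hcomp 2
    _ = ‖Sinv‖ ^ 2 * ‖JU u‖ ^ 2 := by ring
    _ = ‖Sinv‖ ^ 2 * ∫ p in Dset (0:ℝ×ℝ) 1, f p ^ 2 := by rw [hL2]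
    _ ≤ (‖Sinv‖ ^ 2 + 1) * ∫ p in Dset (0:ℝ×ℝ) 1, f p ^ 2 := by nlinarith

lemma point_bound (l : ℕ) : ∃ C : ℝ, 0 < C ∧ ∀ f : ℝ × ℝ → ℝ, IsPolyDeg l f →
    ∀ a : ℝ × ℝ, ∀ ρ : ℝ, 0 < ρ →
      f a ^ 2 ≤ C / ρ ^ 2 * ∫ p in Dset a ρ, f p ^ 2 := by
  obtain ⟨C, hC, hcore⟩ := core l
  refine ⟨C, hC, ?_⟩
  intro f hf a ρ hρ
  have hg : IsPolyDeg l (fun z => f (a + ρ • z)) := comp_affine hf a ρ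
  have hmem : ∀ z : ℝ × ℝ, (a + ρ • z ∈ Dset a ρ) ↔ z ∈ Dset 0 1 := by
    intro z
    show ((a + ρ • z).1 - a.1) ^ 2 + ((a + ρ • z).2 - a.2) ^ 2 ≤ ρ ^ 2
      ↔ (z.1 - 0) ^ 2 + (z.2 - 0) ^ 2 ≤ 1 ^ 2
    have e1 : (a + ρ • z).1 = a.1 + ρ * z.1 := rfl
    have e2 : (a + ρ • z).2 = a.2 + ρ * z.2 := rfl
    rw [e1, e2]
    have hρ2 : 0 < ρ ^ 2 := by positivity
    constructor <;> intro h <;> nlinarith [sq_nonneg z.1, sq_nonneg z.2]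
  have hcov : ∫ z in Dset (0:ℝ×ℝ) 1, f (a + ρ • z) ^ 2
      = (ρ ^ 2)⁻¹ * ∫ p in Dset a ρ, f p ^ 2 := by
    set F : ℝ × ℝ → ℝ := fun p => f p ^ 2 with hF
    set G : ℝ × ℝ → ℝ := (Dset a ρ).indicator F with hG
    have h1 : ∫ p in Dset a ρ, f p ^ 2 = ∫ p, G p :=
      (integral_indicator (measurableSet_Dset a ρ)).symm
    have h2 : ∫ z in Dset (0:ℝ×ℝ) 1, f (a + ρ • z) ^ 2
        = ∫ z, G (a + ρ • z) := by
      rw [← integral_indicator (measurableSet_Dset 0 1)]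
      congr 1
      funext z
      by_cases hz : z ∈ Dset (0:ℝ×ℝ) 1
      · rw [Set.indicator_of_mem hz, hG, Set.indicator_of_mem ((hmem z).mpr hz)]
      · rw [Set.indicator_of_notMem hz, hG,
          Set.indicator_of_notMem (fun h => hz ((hmem z).mp h))]
    have h3 : ∫ z, G (a + ρ • z) = (ρ ^ 2)⁻¹ * ∫ w, G (a + w) := by
      have hfr : Module.finrank ℝ (ℝ × ℝ) = 2 := by
        simp [Module.finrank_prod]
      have := Measure.integral_comp_smul (volume : Measure (ℝ × ℝ))
        (fun w => G (a + w)) ρ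
      rw [hfr] at this
      rw [this, abs_of_nonneg (by positivity : (0:ℝ) ≤ (ρ ^ 2)⁻¹), smul_eq_mul]
    have h4 : ∫ w, G (a + w) = ∫ p, G p := integral_add_left_eq_self G a
    rw [h2, h3, h4, ← h1]
  have hb := hcore _ hg
  rw [hcov] at hb
  have h0 : f (a + ρ • (0:ℝ×ℝ)) = f a := by simp
  rw [h0] at hb
  calc f a ^ 2 ≤ C * ((ρ ^ 2)⁻¹ * ∫ p in Dset a ρ, f p ^ 2) := hb
    _ = C / ρ ^ 2 * ∫ p in Dset a ρ, f p ^ 2 := by ring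

end WRK

open WRK

set_option maxHeartbeats 1000000 in
/-- If `D` is the disk of radius `ρ` centered at `a` with `a.1 ≥ ρ` and the polynomial
`η` of degree `≤ l` satisfies the reproducing property
`∫_D r³ η p = p(a)` for all polynomials `p` of degree `≤ l`, then
`∫_D r³ |η| ≤ C` with `C` depending only on `l`. -/
theorem weighted_reproducing_kernel_L1_bound (l : ℕ) :
    ∃ C : ℝ, 0 < C ∧
      ∀ ρ : ℝ, 0 < ρ → ∀ a : ℝ × ℝ, ρ ≤ a.1 →
        ∀ η : ℝ × ℝ → ℝ, IsPolyDeg l η →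
          (∀ q : ℝ × ℝ → ℝ, IsPolyDeg l q →
            (∫ p in {p : ℝ × ℝ | (p.1 - a.1) ^ 2 + (p.2 - a.2) ^ 2 ≤ ρ ^ 2},
              p.1 ^ 3 * η p * q p) = q a) →
          (∫ p in {p : ℝ × ℝ | (p.1 - a.1) ^ 2 + (p.2 - a.2) ^ 2 ≤ ρ ^ 2},
            p.1 ^ 3 * |η p|) ≤ C := by
  classical
  obtain ⟨C, hC, hpb⟩ := point_bound l
  refine ⟨Real.sqrt (1024 * C) + 1, by positivity, ?_⟩
  intro ρ hρ a ha η hη hrep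
  have hsetEq : {p : ℝ × ℝ | (p.1 - a.1) ^ 2 + (p.2 - a.2) ^ 2 ≤ ρ ^ 2} = Dset a ρ := rfl
  rw [hsetEq] at hrep ⊢
  have hSmeas : MeasurableSet (Dset a ρ) := measurableSet_Dset a ρ
  have hScomp : IsCompact (Dset a ρ) := isCompact_Dset a hρ.le
  have ha1 : 0 < a.1 := lt_of_lt_of_le hρ ha
  have hr_nonneg : ∀ p ∈ Dset a ρ, 0 ≤ p.1 := by
    intro p hp
    have := (Dset_subset_prod a hρ.le hp).1.1
    linarith
  have hr_le : ∀ p ∈ Dset a ρ, p.1 ≤ 2 * a.1 := by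
    intro p hp
    have := (Dset_subset_prod a hρ.le hp).1.2
    linarith
  have hηc : Continuous η := polyContinuous hη
  -- integrability
  have hint1 : IntegrableOn (fun p : ℝ × ℝ => p.1 ^ 3 * η p ^ 2) (Dset a ρ) volume :=
    ContinuousOn.integrableOn_compact hScomp (by fun_prop)
  have hint2 : IntegrableOn (fun p : ℝ × ℝ => p.1 ^ 3 * |η p|) (Dset a ρ) volume :=
    ContinuousOn.integrableOn_compact hScomp (by fun_prop)
  have hint3 : IntegrableOn (fun p : ℝ × ℝ => p.1 ^ 3) (Dset a ρ) volume :=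
    ContinuousOn.integrableOn_compact hScomp (by fun_prop)
  set E : ℝ := ∫ p in Dset a ρ, p.1 ^ 3 * η p ^ 2 with hE
  set V : ℝ := ∫ p in Dset a ρ, p.1 ^ 3 with hV
  set I : ℝ := ∫ p in Dset a ρ, p.1 ^ 3 * |η p| with hI
  have hErep : E = η a := by
    rw [hE, show (fun p : ℝ × ℝ => p.1 ^ 3 * η p ^ 2)
      = fun p : ℝ × ℝ => p.1 ^ 3 * η p * η p from funext fun p => by ring]
    exact hrep η hη
  have hE0 : 0 ≤ E :=
    setIntegral_nonneg hSmeas fun p hp =>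
      mul_nonneg (pow_nonneg (hr_nonneg p hp) 3) (sq_nonneg _)
  have hV0 : 0 ≤ V :=
    setIntegral_nonneg hSmeas fun p hp => pow_nonneg (hr_nonneg p hp) 3
  have hI0 : 0 ≤ I :=
    setIntegral_nonneg hSmeas fun p hp =>
      mul_nonneg (pow_nonneg (hr_nonneg p hp) 3) (abs_nonneg _)
  -- bound on V
  have hVle : V ≤ 32 * a.1 ^ 3 * ρ ^ 2 := by
    have hb := norm_setIntegral_le_of_norm_le_const (μ := volume) (s := Dset a ρ)
      (f := fun p : ℝ × ℝ => p.1 ^ 3) (C := (2 * a.1) ^ 3) (volume_Dset_lt_top a hρ.le)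
      (fun p hp => by
        rw [Real.norm_eq_abs, abs_of_nonneg (pow_nonneg (hr_nonneg p hp) 3)]
        exact pow_le_pow_left₀ (hr_nonneg p hp) (hr_le p hp) 3)
    rw [Real.norm_eq_abs] at hb
    calc V ≤ |V| := le_abs_self V
      _ ≤ (2 * a.1) ^ 3 * (volume (Dset a ρ)).toReal := hb
      _ ≤ (2 * a.1) ^ 3 * (4 * ρ ^ 2) := by
          have h4 := volume_Dset_toReal_le a hρ.le
          have : (0:ℝ) ≤ (2 * a.1) ^ 3 := by positivity
          nlinarith
      _ = 32 * a.1 ^ 3 * ρ ^ 2 := by ring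
  -- Cauchy-Schwarz type inequality
  have hCS : ∀ t : ℝ, 0 < t → 2 * t * I ≤ E + t ^ 2 * V := by
    intro t ht
    have hintt : IntegrableOn (fun p : ℝ × ℝ => p.1 ^ 3 * (|η p| - t) ^ 2) (Dset a ρ) volume :=
      ContinuousOn.integrableOn_compact hScomp (by fun_prop)
    have hJ0 : 0 ≤ ∫ p in Dset a ρ, p.1 ^ 3 * (|η p| - t) ^ 2 :=
      setIntegral_nonneg hSmeas fun p hp =>
        mul_nonneg (pow_nonneg (hr_nonneg p hp) 3) (sq_nonneg _)
    have hptw : (fun p : ℝ × ℝ => p.1 ^ 3 * (|η p| - t) ^ 2)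
        = fun p : ℝ × ℝ => (p.1 ^ 3 * η p ^ 2 - (2 * t) * (p.1 ^ 3 * |η p|))
            + t ^ 2 * p.1 ^ 3 := by
      funext p
      have habs : |η p| ^ 2 = η p ^ 2 := sq_abs (η p)
      linear_combination p.1 ^ 3 * habs
    have hsub : IntegrableOn
        (fun p : ℝ × ℝ => p.1 ^ 3 * η p ^ 2 - 2 * t * (p.1 ^ 3 * |η p|)) (Dset a ρ) volume :=
      hint1.sub (hint2.const_mul (2 * t))
    have hconst : IntegrableOn (fun p : ℝ × ℝ => t ^ 2 * p.1 ^ 3) (Dset a ρ) volume :=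
      hint3.const_mul (t ^ 2)
    have hsplit : ∫ p in Dset a ρ, p.1 ^ 3 * (|η p| - t) ^ 2
        = E - 2 * t * I + t ^ 2 * V := by
      rw [hptw, integral_add hsub hconst, integral_sub hint1 (hint2.const_mul (2 * t)),
        integral_const_mul, integral_const_mul]
    linarith [hsplit ▸ hJ0]
  -- point bound applied on the half disk
  have hρ2 : (0:ℝ) < ρ / 2 := by linarith
  have hS2 : Dset a (ρ / 2) ⊆ Dset a ρ := by
    intro p hp
    have h : (p.1 - a.1) ^ 2 + (p.2 - a.2) ^ 2 ≤ (ρ / 2) ^ 2 := hp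
    show (p.1 - a.1) ^ 2 + (p.2 - a.2) ^ 2 ≤ ρ ^ 2
    nlinarith
  have hS2meas : MeasurableSet (Dset a (ρ / 2)) := measurableSet_Dset a (ρ / 2)
  have hS2comp : IsCompact (Dset a (ρ / 2)) := isCompact_Dset a hρ2.le
  have hhalf : ∀ p ∈ Dset a (ρ / 2), a.1 / 2 ≤ p.1 := by
    intro p hp
    have := (Dset_subset_prod a hρ2.le hp).1.1
    linarith
  have hint4 : IntegrableOn (fun p : ℝ × ℝ => η p ^ 2) (Dset a (ρ / 2)) volume :=
    ContinuousOn.integrableOn_compact hS2comp (by fun_prop)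
  have hint5 : IntegrableOn (fun p : ℝ × ℝ => (2 / a.1) ^ 3 * (p.1 ^ 3 * η p ^ 2))
      (Dset a (ρ / 2)) volume :=
    ContinuousOn.integrableOn_compact hS2comp (by fun_prop)
  have hstep2 : ∫ p in Dset a (ρ / 2), η p ^ 2
      ≤ (2 / a.1) ^ 3 * ∫ p in Dset a (ρ / 2), p.1 ^ 3 * η p ^ 2 := by
    rw [← integral_const_mul]
    refine setIntegral_mono_on hint4 hint5 hS2meas fun p hp => ?_
    have h1 : (a.1 / 2) ^ 3 ≤ p.1 ^ 3 := pow_le_pow_left₀ (by positivity) (hhalf p hp) 3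
    have h3 : (2 / a.1) ^ 3 * (a.1 / 2) ^ 3 = 1 := by
      rw [← mul_pow]
      rw [show 2 / a.1 * (a.1 / 2) = 1 by field_simp]
      norm_num
    have h2 : (1:ℝ) ≤ (2 / a.1) ^ 3 * p.1 ^ 3 := by
      calc (1:ℝ) = (2 / a.1) ^ 3 * (a.1 / 2) ^ 3 := h3.symm
        _ ≤ (2 / a.1) ^ 3 * p.1 ^ 3 :=
            mul_le_mul_of_nonneg_left h1 (by positivity)
    calc η p ^ 2 = 1 * η p ^ 2 := (one_mul _).symm
      _ ≤ ((2 / a.1) ^ 3 * p.1 ^ 3) * η p ^ 2 :=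
          mul_le_mul_of_nonneg_right h2 (sq_nonneg _)
      _ = (2 / a.1) ^ 3 * (p.1 ^ 3 * η p ^ 2) := by ring
  have hstep3 : ∫ p in Dset a (ρ / 2), p.1 ^ 3 * η p ^ 2 ≤ E := by
    refine setIntegral_mono_set hint1 ?_ (HasSubset.Subset.eventuallyLE hS2)
    refine (ae_restrict_iff' hSmeas).2 (Filter.Eventually.of_forall fun p hp =>
      mul_nonneg (pow_nonneg (hr_nonneg p hp) 3) (sq_nonneg _))
  have hkey : η a ^ 2 ≤ 32 * C / (ρ ^ 2 * a.1 ^ 3) * E := by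
    have hpb2 := hpb η hη a (ρ / 2) hρ2
    have hc1 : (0:ℝ) ≤ C / (ρ / 2) ^ 2 := by positivity
    calc η a ^ 2 ≤ C / (ρ / 2) ^ 2 * ∫ p in Dset a (ρ / 2), η p ^ 2 := hpb2
      _ ≤ C / (ρ / 2) ^ 2 * ((2 / a.1) ^ 3 * ∫ p in Dset a (ρ / 2), p.1 ^ 3 * η p ^ 2) :=
          mul_le_mul_of_nonneg_left hstep2 hc1
      _ ≤ C / (ρ / 2) ^ 2 * ((2 / a.1) ^ 3 * E) := by
          have : (0:ℝ) ≤ (2 / a.1) ^ 3 := by positivity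
          have := mul_le_mul_of_nonneg_left hstep3 this
          exact mul_le_mul_of_nonneg_left this hc1
      _ = 32 * C / (ρ ^ 2 * a.1 ^ 3) * E := by
          field_simp
          ring
  -- I² ≤ E · V
  have hEV : I ^ 2 ≤ E * V := by
    rcases eq_or_lt_of_le hI0 with hIz | hIpos
    · rw [← hIz]
      simpa using mul_nonneg hE0 hV0
    · rcases eq_or_lt_of_le hV0 with hVz | hVpos
      · exfalso
        have hcs := hCS ((E + 1) / (2 * I)) (by positivity)
        rw [← hVz] at hcs
        have heq : 2 * ((E + 1) / (2 * I)) * I = E + 1 := by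
          field_simp
        rw [heq] at hcs
        linarith
      · have hcs := hCS (I / V) (by positivity)
        have hV' : V ≠ 0 := hVpos.ne'
        have h1 : 2 * (I / V) * I = 2 * (I ^ 2 / V) := by ring
        have h2 : (I / V) ^ 2 * V = I ^ 2 / V := by
          field_simp
        rw [h1, h2] at hcs
        have h3 : I ^ 2 / V ≤ E := by linarith
        calc I ^ 2 = I ^ 2 / V * V := by field_simp
          _ ≤ E * V := mul_le_mul_of_nonneg_right h3 hV0
  -- conclude
  rcases eq_or_lt_of_le hE0 with hEz | hEpos
  · have hIsq : I ^ 2 ≤ 0 := by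
      rw [← hEz] at hEV
      simpa using hEV
    have hIz : I = 0 := by nlinarith [sq_nonneg I]
    rw [hIz]
    positivity
  · have hEk : E ^ 2 ≤ 32 * C / (ρ ^ 2 * a.1 ^ 3) * E := by
      rw [← hErep] at hkey
      exact hkey
    have hEleK : E ≤ 32 * C / (ρ ^ 2 * a.1 ^ 3) := by nlinarith
    have hfinal : I ^ 2 ≤ 1024 * C := by
      calc I ^ 2 ≤ E * V := hEV
        _ ≤ E * (32 * a.1 ^ 3 * ρ ^ 2) := mul_le_mul_of_nonneg_left hVle hE0
        _ ≤ (32 * C / (ρ ^ 2 * a.1 ^ 3)) * (32 * a.1 ^ 3 * ρ ^ 2) :=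
            mul_le_mul_of_nonneg_right hEleK (by positivity)
        _ = 1024 * C := by field_simp; ring
    have hIle : I ≤ Real.sqrt (1024 * C) := by
      have := Real.sqrt_le_sqrt hfinal
      rwa [Real.sqrt_sq hI0] at this
    linarith
end

section
/- (Weighted inverse estimate) For every integer l ≥ 0 there is a constant C (depending only on l and the shape-regularity constant) such that for every triangle K in the closed half-plane {r ≥ 0} with diameter h_K and inscribed-circle diameter ρ_K satisfying h_K/ρ_K ≤ σ, and every polynomial v of degree ≤ l, one has r_K h_K² ‖v‖²_{L^∞(K)} ≤ C ∫_K v² r dr dz, where r_K = max_{x∈K} r(x). -/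
open MeasureTheory

open scoped ENNReal


noncomputable def Ftest (l : ℕ) (a : Fin (l+1) × Fin (l+1) → ℝ) (p : ℝ × ℝ) : ℝ :=
  ∑ q : Fin (l+1) × Fin (l+1), a q * p.1 ^ (q.1 : ℕ) * p.2 ^ (q.2 : ℕ)

lemma Ftest_continuous (l : ℕ) (a : Fin (l+1) × Fin (l+1) → ℝ) : Continuous (Ftest l a) := by
  unfold Ftest
  exact continuous_finset_sum _ fun q _ =>
    ((continuous_const.mul (continuous_fst.pow _)).mul (continuous_snd.pow _))

noncomputable def didx (i j : ℕ) : Fin 2 →₀ ℕ := Finsupp.single 0 i + Finsupp.single 1 j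

lemma didx_apply0 (i j : ℕ) : didx i j 0 = i := by
  simp [didx, Finsupp.single_apply]

lemma didx_apply1 (i j : ℕ) : didx i j 1 = j := by
  simp [didx, Finsupp.single_apply]

lemma didx_eq (d : Fin 2 →₀ ℕ) : didx (d 0) (d 1) = d := by
  ext k
  fin_cases k
  · simp [didx_apply0]
  · simp [didx_apply1]

lemma didx_inj {i j i' j' : ℕ} (h : didx i j = didx i' j') : i = i' ∧ j = j' := by
  constructor
  · have := congrArg (fun d => d 0) h; simpa [didx_apply0] using this
  · have := congrArg (fun d => d 1) h; simpa [didx_apply1] using this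

lemma repr_poly {l : ℕ} {v : ℝ × ℝ → ℝ} (hv : IsPolyDeg l v) :
    ∃ a : Fin (l+1) × Fin (l+1) → ℝ, ∀ p, v p = Ftest l a p := by
  obtain ⟨P, hdeg, hP⟩ := hv
  refine ⟨fun q => P.coeff (didx q.1 q.2), fun p => ?_⟩
  rw [hP, MvPolynomial.eval_eq']
  have hterm : ∀ d : Fin 2 →₀ ℕ,
      P.coeff d * ∏ i, (![p.1, p.2]) i ^ d i = P.coeff d * p.1 ^ (d 0) * p.2 ^ (d 1) := by
    intro d
    rw [Fin.prod_univ_two]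
    simp [mul_assoc]
  -- sum over support = sum over image of univ
  have hsub : P.support ⊆ Finset.univ.image
      (fun q : Fin (l+1) × Fin (l+1) => didx (q.1 : ℕ) (q.2 : ℕ)) := by
    intro d hd
    have hsum : (d.sum fun _ e => e) ≤ l := le_trans (MvPolynomial.le_totalDegree hd) hdeg
    have hsum' : d 0 + d 1 ≤ l := by
      have : (d.sum fun _ e => e) = d 0 + d 1 := by
        rw [Finsupp.sum_fintype _ _ (fun _ => rfl), Fin.sum_univ_two]
      omega
    refine Finset.mem_image.2 ⟨(⟨d 0, by omega⟩, ⟨d 1, by omega⟩), Finset.mem_univ _, ?_⟩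
    exact didx_eq d
  have hinj : Set.InjOn (fun q : Fin (l+1) × Fin (l+1) => didx (q.1 : ℕ) (q.2 : ℕ))
      (Finset.univ : Finset (Fin (l+1) × Fin (l+1))) := by
    intro q _ q' _ h
    obtain ⟨h1, h2⟩ := didx_inj h
    exact Prod.ext (Fin.val_injective h1) (Fin.val_injective h2)
  calc ∑ d ∈ P.support, P.coeff d * ∏ i, (![p.1, p.2]) i ^ d i
      = ∑ d ∈ Finset.univ.image (fun q : Fin (l+1) × Fin (l+1) => didx (q.1:ℕ) (q.2:ℕ)),
          P.coeff d * ∏ i, (![p.1, p.2]) i ^ d i := by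
        refine Finset.sum_subset hsub fun d _ hd => ?_
        rw [MvPolynomial.notMem_support_iff.1 hd, zero_mul]
    _ = ∑ q : Fin (l+1) × Fin (l+1),
          P.coeff (didx (q.1:ℕ) (q.2:ℕ)) * ∏ i, (![p.1, p.2]) i ^ (didx (q.1:ℕ) (q.2:ℕ)) i := by
        rw [Finset.sum_image (fun q hq q' hq' h => hinj (by simpa using hq) (by simpa using hq') h)]
    _ = Ftest l (fun q => P.coeff (didx q.1 q.2)) p := by
        unfold Ftest
        refine Finset.sum_congr rfl fun q _ => ?_
        rw [hterm]
        simp [didx_apply0, didx_apply1]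


section PolyAux
open Polynomial
-- coefficient extraction for 1-variable sums
lemma coeff_sum_CX {n : ℕ} (g : Fin (n+1) → ℝ) (j : Fin (n+1)) :
    (∑ i : Fin (n+1), C (g i) * X ^ (i : ℕ)).coeff (j : ℕ) = g j := by
  rw [Polynomial.finset_sum_coeff]
  have : ∀ i : Fin (n+1), (C (g i) * X ^ (i:ℕ)).coeff (j:ℕ) = if i = j then g i else 0 := by
    intro i
    rw [Polynomial.coeff_C_mul, Polynomial.coeff_X_pow]
    by_cases h : i = j
    · simp [h]
    · have : ¬ ((j:ℕ) = (i:ℕ)) := fun hc => h (Fin.val_injective hc.symm)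
      simp [this, h]
  simp only [this]
  simp

lemma Fzero_of_allzero {l : ℕ} {a : Fin (l+1) × Fin (l+1) → ℝ}
    (h : ∀ z : ℝ × ℝ, Ftest l a z = 0) : a = 0 := by
  -- first: for each x, the polynomial in y is zero
  have h1 : ∀ (x : ℝ) (j : Fin (l+1)), ∑ i : Fin (l+1), a (i, j) * x ^ (i:ℕ) = 0 := by
    intro x j
    have hpoly : (∑ j' : Fin (l+1), C (∑ i : Fin (l+1), a (i, j') * x ^ (i:ℕ)) * X ^ (j':ℕ))
        = (0 : ℝ[X]) := by
      apply Polynomial.funext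
      intro y
      rw [Polynomial.eval_finset_sum]
      simp only [Polynomial.eval_mul, Polynomial.eval_C, Polynomial.eval_pow, Polynomial.eval_X,
        Polynomial.eval_zero]
      have : ∑ j' : Fin (l+1), (∑ i : Fin (l+1), a (i, j') * x ^ (i:ℕ)) * y ^ (j':ℕ)
          = Ftest l a (x, y) := by
        unfold Ftest
        rw [Fintype.sum_prod_type_right]
        refine Finset.sum_congr rfl fun j' _ => ?_
        rw [Finset.sum_mul]
      rw [this, h]
    have := congrArg (fun p => Polynomial.coeff p (j:ℕ)) hpoly
    simpa only [coeff_sum_CX, Polynomial.coeff_zero] using this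
  have h2 : ∀ (i j : Fin (l+1)), a (i, j) = 0 := by
    intro i j
    have hpoly : (∑ i' : Fin (l+1), C (a (i', j)) * X ^ (i':ℕ)) = (0 : ℝ[X]) := by
      apply Polynomial.funext
      intro x
      rw [Polynomial.eval_finset_sum]
      simpa [Polynomial.eval_mul] using h1 x j
    have := congrArg (fun p => Polynomial.coeff p (i:ℕ)) hpoly
    simpa only [coeff_sum_CX, Polynomial.coeff_zero] using this
  funext q
  exact h2 q.1 q.2

lemma Fzero_of_ball {l : ℕ} {a : Fin (l+1) × Fin (l+1) → ℝ}
    (h : ∀ y ∈ Metric.ball (0 : ℝ × ℝ) 1, Ftest l a y = 0) : a = 0 := by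
  apply Fzero_of_allzero
  intro z
  set δ : ℝ := (‖z‖ + 1)⁻¹ with hδ
  have hδpos : 0 < δ := by positivity
  set q : ℝ[X] := ∑ p : Fin (l+1) × Fin (l+1),
    C (a p * z.1 ^ (p.1:ℕ) * z.2 ^ (p.2:ℕ)) * X ^ ((p.1:ℕ) + (p.2:ℕ)) with hq
  have heval : ∀ ε : ℝ, q.eval ε = Ftest l a (ε • z) := by
    intro ε
    rw [hq, Polynomial.eval_finset_sum]
    unfold Ftest
    refine Finset.sum_congr rfl fun p _ => ?_
    simp only [Polynomial.eval_mul, Polynomial.eval_C, Polynomial.eval_pow, Polynomial.eval_X,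
      Prod.smul_fst, Prod.smul_snd, smul_eq_mul]
    rw [pow_add]
    ring
  have hroots : q = 0 := by
    apply Polynomial.eq_zero_of_infinite_isRoot
    apply Set.Infinite.mono (s := Set.Ioo 0 δ)
    · intro ε hε
      simp only [Set.mem_setOf_eq, Polynomial.IsRoot.def]
      rw [heval]
      apply h
      rw [Metric.mem_ball, dist_zero_right, norm_smul, Real.norm_eq_abs,
        abs_of_pos hε.1]
      have h1 : ε * ‖z‖ < δ * (‖z‖ + 1) := by
        nlinarith [hε.1, hε.2, norm_nonneg z]
      rw [hδ] at h1
      rw [inv_mul_cancel₀ (by positivity)] at h1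
      exact h1
    · exact Set.Ioo_infinite hδpos
  have := heval 1
  rw [hroots] at this
  simpa [one_smul] using this.symm

end PolyAux

noncomputable def Ntest (l : ℕ) (a : Fin (l+1) × Fin (l+1) → ℝ) : ℝ :=
  ∫ y in Metric.closedBall (0 : ℝ × ℝ) 1, (Ftest l a y) ^ 2

lemma Ntest_nonneg (l : ℕ) (a : Fin (l+1) × Fin (l+1) → ℝ) : 0 ≤ Ntest l a :=
  setIntegral_nonneg measurableSet_closedBall fun y _ => sq_nonneg _

lemma Ntest_eq_sum (l : ℕ) (a : Fin (l+1) × Fin (l+1) → ℝ) :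
    Ntest l a = ∑ q : Fin (l+1) × Fin (l+1), ∑ q' : Fin (l+1) × Fin (l+1),
      (a q * a q') * ∫ y in Metric.closedBall (0 : ℝ × ℝ) 1,
        y.1 ^ ((q.1:ℕ) + (q'.1:ℕ)) * y.2 ^ ((q.2:ℕ) + (q'.2:ℕ)) := by
  have hint : ∀ (i j : ℕ), IntegrableOn
      (fun y : ℝ × ℝ => y.1 ^ i * y.2 ^ j) (Metric.closedBall (0 : ℝ × ℝ) 1) volume := by
    intro i j
    exact ((continuous_fst.pow i).mul (continuous_snd.pow j)).continuousOn.integrableOn_compact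
      (isCompact_closedBall _ _)
  have hexp : ∀ y : ℝ × ℝ, (Ftest l a y) ^ 2 =
      ∑ q : Fin (l+1) × Fin (l+1), ∑ q' : Fin (l+1) × Fin (l+1),
        (a q * a q') * (y.1 ^ ((q.1:ℕ) + (q'.1:ℕ)) * y.2 ^ ((q.2:ℕ) + (q'.2:ℕ))) := by
    intro y
    rw [sq]
    unfold Ftest
    rw [Finset.sum_mul_sum]
    refine Finset.sum_congr rfl fun q _ => Finset.sum_congr rfl fun q' _ => ?_
    rw [pow_add, pow_add]
    ring
  unfold Ntest
  rw [MeasureTheory.integral_congr_ae (Filter.Eventually.of_forall fun y => hexp y)]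
  rw [MeasureTheory.integral_finset_sum]
  · refine Finset.sum_congr rfl fun q _ => ?_
    rw [MeasureTheory.integral_finset_sum]
    · refine Finset.sum_congr rfl fun q' _ => ?_
      exact MeasureTheory.integral_const_mul _ _
    · intro q' _
      exact (hint _ _).const_mul _
  · intro q _
    apply MeasureTheory.integrable_finset_sum
    intro q' _
    exact (hint _ _).const_mul _

lemma Ntest_continuous (l : ℕ) : Continuous (Ntest l) := by
  have : Ntest l = fun a => ∑ q : Fin (l+1) × Fin (l+1), ∑ q' : Fin (l+1) × Fin (l+1),
      (a q * a q') * ∫ y in Metric.closedBall (0 : ℝ × ℝ) 1,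
        y.1 ^ ((q.1:ℕ) + (q'.1:ℕ)) * y.2 ^ ((q.2:ℕ) + (q'.2:ℕ)) := by
    funext a; exact Ntest_eq_sum l a
  rw [this]
  refine continuous_finset_sum _ fun q _ => continuous_finset_sum _ fun q' _ => ?_
  exact ((continuous_apply q).mul (continuous_apply q')).mul continuous_const

lemma Ftest_smul (l : ℕ) (r : ℝ) (a : Fin (l+1) × Fin (l+1) → ℝ) (p : ℝ × ℝ) :
    Ftest l (r • a) p = r * Ftest l a p := by
  unfold Ftest
  rw [Finset.mul_sum]
  refine Finset.sum_congr rfl fun q _ => ?_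
  simp [mul_assoc]

lemma Ntest_smul (l : ℕ) (r : ℝ) (a : Fin (l+1) × Fin (l+1) → ℝ) :
    Ntest l (r • a) = r ^ 2 * Ntest l a := by
  unfold Ntest
  rw [← MeasureTheory.integral_const_mul]
  refine MeasureTheory.integral_congr_ae (Filter.Eventually.of_forall fun y => ?_)
  simp only []
  rw [Ftest_smul, mul_pow]

lemma Ntest_pos {l : ℕ} {a : Fin (l+1) × Fin (l+1) → ℝ} (ha : a ≠ 0) : 0 < Ntest l a := by
  -- there is a point in the open unit ball where Ftest l a ≠ 0
  have hy : ∃ y ∈ Metric.ball (0 : ℝ × ℝ) 1, Ftest l a y ≠ 0 := by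
    by_contra hcon
    push_neg at hcon
    exact ha (Fzero_of_ball hcon)
  obtain ⟨y₀, hy₀mem, hy₀⟩ := hy
  have hfi : IntegrableOn (fun y => (Ftest l a y) ^ 2) (Metric.closedBall (0:ℝ×ℝ) 1) volume :=
    ((Ftest_continuous l a).pow 2).continuousOn.integrableOn_compact (isCompact_closedBall _ _)
  rw [Ntest, setIntegral_pos_iff_support_of_nonneg_ae
    (Filter.Eventually.of_forall fun y => sq_nonneg _) hfi]
  have hopen : IsOpen (Function.support (fun y => (Ftest l a y) ^ 2) ∩ Metric.ball (0:ℝ×ℝ) 1) := by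
    apply IsOpen.inter _ Metric.isOpen_ball
    have : Function.support (fun y => (Ftest l a y) ^ 2) = (fun y => (Ftest l a y)^2) ⁻¹' {0}ᶜ := by
      ext y; simp [Function.mem_support]
    rw [this]
    exact (isOpen_compl_singleton).preimage ((Ftest_continuous l a).pow 2)
  have hne : (Function.support (fun y => (Ftest l a y) ^ 2) ∩ Metric.ball (0:ℝ×ℝ) 1).Nonempty :=
    ⟨y₀, by simp [Function.mem_support, pow_eq_zero_iff, hy₀], hy₀mem⟩
  calc (0:ℝ≥0∞) < volume (Function.support (fun y => (Ftest l a y) ^ 2) ∩ Metric.ball (0:ℝ×ℝ) 1) :=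
        hopen.measure_pos volume hne
    _ ≤ volume (Function.support (fun y => (Ftest l a y) ^ 2) ∩ Metric.closedBall (0:ℝ×ℝ) 1) :=
        measure_mono (Set.inter_subset_inter_right _ Metric.ball_subset_closedBall)

lemma Ntest_coercive (l : ℕ) : ∃ m : ℝ, 0 < m ∧ ∀ a, m * ‖a‖ ^ 2 ≤ Ntest l a := by
  have hsphere : (Metric.sphere (0 : Fin (l+1) × Fin (l+1) → ℝ) 1).Nonempty :=
    NormedSpace.sphere_nonempty.2 zero_le_one
  obtain ⟨a₀, ha₀mem, hmin⟩ := (isCompact_sphere (0 : Fin (l+1) × Fin (l+1) → ℝ) 1).exists_isMinOn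
    hsphere (Ntest_continuous l).continuousOn
  have ha₀norm : ‖a₀‖ = 1 := by simpa using ha₀mem
  have ha₀ne : a₀ ≠ 0 := by
    intro h; rw [h] at ha₀norm; simp at ha₀norm
  refine ⟨Ntest l a₀, Ntest_pos ha₀ne, fun a => ?_⟩
  by_cases ha : a = 0
  · subst ha
    have : Ftest l (0 : Fin (l+1) × Fin (l+1) → ℝ) = fun _ => 0 := by
      funext p; unfold Ftest; simp
    simp [Ntest, this]
  · set u := ‖a‖⁻¹ • a with hu
    have hunorm : ‖a‖ ≠ 0 := norm_ne_zero_iff.2 ha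
    have humem : u ∈ Metric.sphere (0 : Fin (l+1) × Fin (l+1) → ℝ) 1 := by
      simp [hu, norm_smul, inv_mul_cancel₀ hunorm]
    have h1 : Ntest l a₀ ≤ Ntest l u := hmin humem
    have h2 : Ntest l a = ‖a‖ ^ 2 * Ntest l u := by
      conv_lhs => rw [show a = ‖a‖ • u by rw [hu, smul_smul, mul_inv_cancel₀ hunorm, one_smul]]
      rw [Ntest_smul]
    rw [h2]
    exact mul_le_mul_of_nonneg_left h1 (sq_nonneg ‖a‖) |>.trans_eq' (by rw [mul_comm])

lemma Ftest_bound (l : ℕ) (R : ℝ) (a : Fin (l+1) × Fin (l+1) → ℝ) (y : ℝ × ℝ)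
    (hy : ‖y‖ ≤ R) :
    (Ftest l a y) ^ 2 ≤ ((l+1:ℝ)^2 * max 1 R ^ l * max 1 R ^ l) ^ 2 * ‖a‖ ^ 2 := by
  set R' := max 1 R with hR'
  have hR'1 : (1:ℝ) ≤ R' := le_max_left _ _
  have habs : |Ftest l a y| ≤ (l+1:ℝ)^2 * R' ^ l * R' ^ l * ‖a‖ := by
    unfold Ftest
    calc |∑ q : Fin (l+1) × Fin (l+1), a q * y.1 ^ (q.1:ℕ) * y.2 ^ (q.2:ℕ)|
        ≤ ∑ q : Fin (l+1) × Fin (l+1), |a q * y.1 ^ (q.1:ℕ) * y.2 ^ (q.2:ℕ)| :=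
          Finset.abs_sum_le_sum_abs _ _
      _ ≤ ∑ _q : Fin (l+1) × Fin (l+1), ‖a‖ * R' ^ l * R' ^ l := by
          refine Finset.sum_le_sum fun q _ => ?_
          rw [abs_mul, abs_mul, abs_pow, abs_pow]
          have hy1 : |y.1| ≤ R' := le_trans (le_trans (norm_fst_le y) hy) (le_max_right _ _)
          have hy2 : |y.2| ≤ R' := le_trans (le_trans (norm_snd_le y) hy) (le_max_right _ _)
          have h1 : |y.1| ^ (q.1:ℕ) ≤ R' ^ l := by
            calc |y.1| ^ (q.1:ℕ) ≤ R' ^ (q.1:ℕ) := pow_le_pow_left₀ (abs_nonneg _) hy1 _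
              _ ≤ R' ^ l := pow_le_pow_right₀ hR'1 (Nat.lt_succ_iff.1 q.1.2)
          have h2 : |y.2| ^ (q.2:ℕ) ≤ R' ^ l := by
            calc |y.2| ^ (q.2:ℕ) ≤ R' ^ (q.2:ℕ) := pow_le_pow_left₀ (abs_nonneg _) hy2 _
              _ ≤ R' ^ l := pow_le_pow_right₀ hR'1 (Nat.lt_succ_iff.1 q.2.2)
          have ha : |a q| ≤ ‖a‖ := by
            have := norm_le_pi_norm a q
            simpa using this
          have h0 : (0:ℝ) ≤ R' ^ l := by positivity
          exact mul_le_mul (mul_le_mul ha h1 (by positivity) (norm_nonneg a)) h2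
            (by positivity) (by positivity)
      _ = ((Fintype.card (Fin (l+1) × Fin (l+1))) : ℝ) * (‖a‖ * R' ^ l * R' ^ l) := by
          rw [Finset.sum_const, Finset.card_univ, nsmul_eq_mul]
      _ = (l+1:ℝ)^2 * R' ^ l * R' ^ l * ‖a‖ := by
          simp only [Fintype.card_prod, Fintype.card_fin]
          push_cast
          ring
  calc (Ftest l a y) ^ 2 = |Ftest l a y| ^ 2 := (sq_abs _).symm
    _ ≤ ((l+1:ℝ)^2 * R' ^ l * R' ^ l * ‖a‖) ^ 2 :=
        pow_le_pow_left₀ (abs_nonneg _) habs 2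
    _ = ((l+1:ℝ)^2 * R' ^ l * R' ^ l) ^ 2 * ‖a‖ ^ 2 := by ring

lemma ref_inequality (l : ℕ) (R : ℝ) :
    ∃ C₀ : ℝ, 0 < C₀ ∧ ∀ a : Fin (l+1) × Fin (l+1) → ℝ, ∀ y : ℝ × ℝ, ‖y‖ ≤ R →
      (Ftest l a y) ^ 2 ≤ C₀ * Ntest l a := by
  obtain ⟨m, hm, hcoer⟩ := Ntest_coercive l
  set M := ((l+1:ℝ)^2 * max 1 R ^ l * max 1 R ^ l) ^ 2 with hM
  have hMpos : 0 < M := by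
    have : (1:ℝ) ≤ max 1 R := le_max_left _ _
    positivity
  refine ⟨M / m, by positivity, fun a y hy => ?_⟩
  calc (Ftest l a y) ^ 2 ≤ M * ‖a‖ ^ 2 := Ftest_bound l R a y hy
    _ = (M / m) * (m * ‖a‖ ^ 2) := by field_simp
    _ ≤ (M / m) * Ntest l a :=
        mul_le_mul_of_nonneg_left (hcoer a) (by positivity)

section MvAux
open MvPolynomial
lemma isPolyDeg_comp {l : ℕ} {v : ℝ × ℝ → ℝ} (hv : IsPolyDeg l v) (c : ℝ × ℝ) (s : ℝ) :
    IsPolyDeg l (fun y => v (c + s • y)) := by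
  obtain ⟨P, hdeg, hP⟩ := hv
  set g : Fin 2 → MvPolynomial (Fin 2) ℝ :=
    fun i => C (![c.1, c.2] i) + C s * X i with hg
  refine ⟨eval₂ C g P, ?_, ?_⟩
  · -- degree bound
    have hgdeg : ∀ i, (g i).totalDegree ≤ 1 := by
      intro i
      refine le_trans (totalDegree_add _ _) ?_
      apply max_le
      · simp [totalDegree_C]
      · refine le_trans (totalDegree_mul _ _) ?_
        simp [totalDegree_C, totalDegree_X]
    conv_lhs => rw [P.as_sum]
    rw [eval₂_sum]
    refine le_trans (totalDegree_finset_sum _ _) ?_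
    apply Finset.sup_le
    intro d hd
    rw [eval₂_monomial]
    refine le_trans (totalDegree_mul _ _) ?_
    rw [totalDegree_C, zero_add]
    have : (d.prod fun n e => g n ^ e).totalDegree ≤ d.sum fun _ e => e := by
      rw [Finsupp.prod]
      refine le_trans (totalDegree_finset_prod _ _) ?_
      rw [Finsupp.sum]
      refine Finset.sum_le_sum fun i _ => ?_
      refine le_trans (totalDegree_pow _ _) ?_
      calc d i * (g i).totalDegree ≤ d i * 1 := Nat.mul_le_mul_left _ (hgdeg i)
        _ = d i := Nat.mul_one _
    exact le_trans this (le_trans (MvPolynomial.le_totalDegree hd) hdeg)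
  · intro p
    rw [show (fun y => v (c + s • y)) p = v (c + s • p) from rfl, hP,
      ← MvPolynomial.eval_assoc]
    have hfun : ![(c + s • p).1, (c + s • p).2] = (eval ![p.1, p.2]) ∘ g := by
      funext i
      fin_cases i <;>
        simp [hg, Prod.fst_add, Prod.snd_add, smul_eq_mul]
    rw [hfun]

end MvAux

lemma finrank_RR : Module.finrank ℝ (ℝ × ℝ) = 2 := by
  simp [Module.finrank_prod]

lemma cov_scale (f : ℝ × ℝ → ℝ) (c' : ℝ × ℝ) (s : ℝ) (hs : 0 < s) :
    ∫ p in Metric.closedBall c' s, f p =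
      s ^ 2 * ∫ y in Metric.closedBall (0 : ℝ × ℝ) 1, f (c' + s • y) := by
  have hind : ∀ y : ℝ × ℝ,
      Set.indicator (Metric.closedBall (0:ℝ×ℝ) 1) (fun y => f (c' + s • y)) y =
      Set.indicator (Metric.closedBall c' s) f (c' + s • y) := by
    intro y
    have hmem : y ∈ Metric.closedBall (0:ℝ×ℝ) 1 ↔ c' + s • y ∈ Metric.closedBall c' s := by
      have hd : dist (c' + s • y) c' = s * ‖y‖ := by
        rw [dist_eq_norm, add_sub_cancel_left, norm_smul, Real.norm_eq_abs, abs_of_pos hs]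
      rw [Metric.mem_closedBall, Metric.mem_closedBall, dist_zero_right, hd]
      exact (mul_le_iff_le_one_right hs).symm
    by_cases hy : y ∈ Metric.closedBall (0:ℝ×ℝ) 1
    · rw [Set.indicator_of_mem hy, Set.indicator_of_mem (hmem.1 hy)]
    · rw [Set.indicator_of_notMem hy, Set.indicator_of_notMem (fun hc => hy (hmem.2 hc))]
  have h1 : ∫ y in Metric.closedBall (0:ℝ×ℝ) 1, f (c' + s • y) =
      ∫ y : ℝ × ℝ, Set.indicator (Metric.closedBall c' s) f (c' + s • y) := by
    rw [← integral_indicator measurableSet_closedBall]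
    exact integral_congr_ae (Filter.Eventually.of_forall hind)
  have h2 : (∫ y : ℝ × ℝ, Set.indicator (Metric.closedBall c' s) f (c' + s • y))
      = |((s : ℝ) ^ Module.finrank ℝ (ℝ × ℝ))⁻¹| •
        ∫ z : ℝ × ℝ, Set.indicator (Metric.closedBall c' s) f (c' + z) := by
    exact MeasureTheory.Measure.integral_comp_smul volume
      (fun z => Set.indicator (Metric.closedBall c' s) f (c' + z)) s
  have h3 : (∫ z : ℝ × ℝ, Set.indicator (Metric.closedBall c' s) f (c' + z))
      = ∫ z : ℝ × ℝ, Set.indicator (Metric.closedBall c' s) f z :=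
    integral_add_left_eq_self _ c'
  rw [h1, h2, h3, integral_indicator measurableSet_closedBall, finrank_RR]
  rw [smul_eq_mul, abs_of_pos (by positivity : (0:ℝ) < ((s:ℝ)^2)⁻¹)]
  field_simp


/-- Weighted inverse estimate: there is `C = C(l, σ)` such that for every nondegenerate
shape-regular triangle `K ⊂ {r ≥ 0}` (diameter `h_K`, inscribed-circle diameter `≥ h_K/σ`)
and every polynomial `v` of degree `≤ l`,
`r_K h_K² ‖v‖²_{L^∞(K)} ≤ C ∫_K v² r dr dz` where `r_K = max_K r`. -/
theorem weighted_inverse_estimate_Linfty (l : ℕ) (σ : ℝ) (hσ : 0 < σ) :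
    ∃ C : ℝ, 0 < C ∧
      ∀ A B D : ℝ × ℝ, ¬ Collinear ℝ ({A, B, D} : Set (ℝ × ℝ)) →
        (∀ x ∈ convexHull ℝ ({A, B, D} : Set (ℝ × ℝ)), 0 ≤ x.1) →
        (∃ c : ℝ × ℝ, ∃ t : ℝ, 0 < t ∧
          Metric.closedBall c t ⊆ convexHull ℝ ({A, B, D} : Set (ℝ × ℝ)) ∧
          Metric.diam (convexHull ℝ ({A, B, D} : Set (ℝ × ℝ))) ≤ σ * (2 * t)) →
        ∀ rK : ℝ, IsGreatest ((fun x : ℝ × ℝ => x.1) '' convexHull ℝ ({A, B, D} : Set (ℝ × ℝ))) rK →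
        ∀ v : ℝ × ℝ → ℝ, IsPolyDeg l v →
          ∀ x ∈ convexHull ℝ ({A, B, D} : Set (ℝ × ℝ)),
            rK * (Metric.diam (convexHull ℝ ({A, B, D} : Set (ℝ × ℝ)))) ^ 2 * (v x) ^ 2
              ≤ C * ∫ p in convexHull ℝ ({A, B, D} : Set (ℝ × ℝ)), (v p) ^ 2 * p.1 := by
  obtain ⟨C₀, hC₀, href⟩ := ref_inequality l (4 * σ + 1)
  refine ⟨16 * σ ^ 2 * (1 + 2 * σ) * C₀, by positivity, ?_⟩
  intro A B D _hcol hpos hball rK hrK v hv x hx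
  set K := convexHull ℝ ({A, B, D} : Set (ℝ × ℝ)) with hKdef
  obtain ⟨c, t, ht, hball_sub, hdiam⟩ := hball
  set h := Metric.diam K with hhdef
  have hKcomp : IsCompact K :=
    Set.Finite.isCompact_convexHull (𝕜 := ℝ) (by
      apply Set.Finite.insert; apply Set.Finite.insert; exact Set.finite_singleton D)
  have hKbdd := hKcomp.isBounded
  have hKmeas : MeasurableSet K := hKcomp.isClosed.measurableSet
  set s := t / 2 with hsdef
  have hs : 0 < s := by rw [hsdef]; linarith
  set c' : ℝ × ℝ := (c.1 + s, c.2) with hc'def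
  have hcK : c ∈ K := hball_sub (Metric.mem_closedBall_self ht.le)
  have hct : t ≤ c.1 := by
    have hmem : ((c.1 - t, c.2) : ℝ × ℝ) ∈ Metric.closedBall c t := by
      rw [Metric.mem_closedBall, Prod.dist_eq]
      simp only [Real.dist_eq]
      rw [show c.1 - t - c.1 = -t by ring]
      simp [abs_of_nonneg ht.le, ht.le]
    have := hpos _ (hball_sub hmem)
    simp only at this
    linarith
  have hc1pos : 0 < c.1 := lt_of_lt_of_le ht hct
  have hdistc'c : dist c' c = s := by
    rw [Prod.dist_eq]
    simp [hc'def, Real.dist_eq, abs_of_pos hs, hs.le]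
  have hBs_sub : Metric.closedBall c' s ⊆ Metric.closedBall c t := by
    apply Metric.closedBall_subset_closedBall'
    rw [hdistc'c]; linarith
  have hBs_sub_K : Metric.closedBall c' s ⊆ K := subset_trans hBs_sub hball_sub
  have hr_lb : ∀ p ∈ Metric.closedBall c' s, c.1 ≤ p.1 := by
    intro p hp
    have h1 : dist p.1 c'.1 ≤ dist p c' := by
      rw [Prod.dist_eq]; exact le_max_left _ _
    rw [Metric.mem_closedBall] at hp
    have := le_trans h1 hp
    rw [Real.dist_eq, abs_le] at this
    have hc'1 : c'.1 = c.1 + s := rfl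
    linarith [this.1]
  -- continuity / integrability
  obtain ⟨av, hav⟩ := repr_poly hv
  have hvcont : Continuous v := by
    have : v = Ftest l av := funext hav
    rw [this]; exact Ftest_continuous l av
  have hIntK : IntegrableOn (fun p : ℝ × ℝ => (v p) ^ 2 * p.1) K volume :=
    ((hvcont.pow 2).mul continuous_fst).continuousOn.integrableOn_compact hKcomp
  have hIntBs1 : IntegrableOn (fun p : ℝ × ℝ => (v p) ^ 2) (Metric.closedBall c' s) volume :=
    (hvcont.pow 2).continuousOn.integrableOn_compact (isCompact_closedBall _ _)
  have hIntBs2 : IntegrableOn (fun p : ℝ × ℝ => (v p) ^ 2 * p.1) (Metric.closedBall c' s) volume :=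
    ((hvcont.pow 2).mul continuous_fst).continuousOn.integrableOn_compact
      (isCompact_closedBall _ _)
  -- the rescaled polynomial
  obtain ⟨a, ha⟩ := repr_poly (isPolyDeg_comp hv c' s)
  set I := ∫ p in Metric.closedBall c' s, (v p) ^ 2 with hIdef
  have hI : I = s ^ 2 * Ntest l a := by
    rw [hIdef, cov_scale (fun p => (v p) ^ 2) c' s hs]
    congr 1
    refine integral_congr_ae (Filter.Eventually.of_forall fun y => ?_)
    have := ha y
    simp only at this ⊢
    rw [this]
  set J := ∫ p in K, (v p) ^ 2 * p.1 with hJdef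
  have step1 : c.1 * I ≤ ∫ p in Metric.closedBall c' s, (v p) ^ 2 * p.1 := by
    rw [hIdef, ← MeasureTheory.integral_const_mul]
    refine setIntegral_mono_on (hIntBs1.const_mul _) hIntBs2 measurableSet_closedBall ?_
    intro p hp
    have := hr_lb p hp
    nlinarith [sq_nonneg (v p)]
  have step2 : (∫ p in Metric.closedBall c' s, (v p) ^ 2 * p.1) ≤ J := by
    rw [hJdef]
    refine setIntegral_mono_set hIntK ?_ (HasSubset.Subset.eventuallyLE hBs_sub_K)
    filter_upwards [ae_restrict_mem hKmeas] with p hp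
    exact mul_nonneg (sq_nonneg _) (hpos p hp)
  have hc1I_J : c.1 * I ≤ J := le_trans step1 step2
  -- rK bounds
  obtain ⟨x₀, hx₀K, hx₀⟩ := hrK.1
  have hrK0 : 0 ≤ rK := hx₀ ▸ hpos x₀ hx₀K
  have hh0 : 0 ≤ h := Metric.diam_nonneg
  have hh4s : h ≤ 4 * σ * s := by
    rw [hhdef]
    calc Metric.diam K ≤ σ * (2 * t) := hdiam
      _ = 4 * σ * s := by rw [hsdef]; ring
  have hx₀' : x₀.1 = rK := hx₀
  have hrK0 : 0 ≤ rK := hx₀' ▸ hpos x₀ hx₀K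
  have hrKle : rK ≤ c.1 + h := by
    have h1 : dist x₀.1 c.1 ≤ dist x₀ c := by rw [Prod.dist_eq]; exact le_max_left _ _
    have h2 : dist x₀ c ≤ h := Metric.dist_le_diam_of_mem hKbdd hx₀K hcK
    have h3 : |x₀.1 - c.1| ≤ h := by rw [← Real.dist_eq]; exact le_trans h1 h2
    have := (abs_le.1 h3).2
    linarith [hx₀'.symm.le, hx₀'.le]
  -- point bound
  set y₀ : ℝ × ℝ := s⁻¹ • (x - c') with hy₀def
  have hxy : c' + s • y₀ = x := by
    rw [hy₀def, smul_smul, mul_inv_cancel₀ (ne_of_gt hs), one_smul]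
    abel
  have hy₀norm : ‖y₀‖ ≤ 4 * σ + 1 := by
    have hcc' : dist c c' = s := by rw [dist_comm]; exact hdistc'c
    have hxc : dist x c ≤ h := Metric.dist_le_diam_of_mem hKbdd hx hcK
    have hdxc' : dist x c' ≤ h + s := by
      have := dist_triangle x c c'
      linarith
    have hnorm : ‖y₀‖ = s⁻¹ * dist x c' := by
      rw [hy₀def, norm_smul, Real.norm_eq_abs, abs_of_pos (inv_pos.2 hs), dist_eq_norm]
    rw [hnorm]
    calc s⁻¹ * dist x c' ≤ s⁻¹ * (4*σ*s + s) := by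
          apply mul_le_mul_of_nonneg_left _ (inv_nonneg.2 hs.le)
          linarith [dist_nonneg (x := x) (y := c')]
      _ = 4*σ + 1 := by field_simp
  have hvx : (v x) ^ 2 ≤ C₀ * Ntest l a := by
    have hvxa : v x = Ftest l a y₀ := by rw [← hxy]; exact ha y₀
    rw [hvxa]
    exact href a y₀ hy₀norm
  -- final assembly
  have hNt0 : 0 ≤ Ntest l a := Ntest_nonneg l a
  have hh2 : h ^ 2 ≤ 16 * σ^2 * s^2 := by nlinarith
  have hrK2 : rK ≤ (1 + 2*σ) * c.1 := by nlinarith [mul_le_mul_of_nonneg_left hct hσ.le]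
  have e1 : rK * h ^ 2 ≤ ((1 + 2*σ) * c.1) * (16 * σ^2 * s^2) :=
    mul_le_mul hrK2 hh2 (sq_nonneg h) (by positivity)
  have e2 : rK * h^2 * (v x)^2 ≤ ((1+2*σ)*c.1) * (16*σ^2*s^2) * (v x)^2 :=
    mul_le_mul_of_nonneg_right e1 (sq_nonneg _)
  have e3 : ((1+2*σ)*c.1) * (16*σ^2*s^2) * (v x)^2
      ≤ ((1+2*σ)*c.1) * (16*σ^2*s^2) * (C₀ * Ntest l a) :=
    mul_le_mul_of_nonneg_left hvx (by positivity)
  have e4 : ((1+2*σ)*c.1) * (16*σ^2*s^2) * (C₀ * Ntest l a)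
      = (16*σ^2*(1+2*σ)*C₀) * (c.1 * I) := by rw [hI]; ring
  have e5 : (16*σ^2*(1+2*σ)*C₀) * (c.1 * I) ≤ (16*σ^2*(1+2*σ)*C₀) * J :=
    mul_le_mul_of_nonneg_left hc1I_J (by positivity)
  linarith
end

section
/- (Weighted inverse estimate for gradients) There exists C depending only on l and the shape-regularity constant such that for every shape-regular triangle K in {r ≥ 0} and every polynomial v of degree ≤ l, ∫_K |∇v|² r dr dz ≤ C h_K^{-2} ∫_K v² r dr dz. -/
open MeasureTheory

namespace WIE

open Metric Finset Pointwise

/-! ### One- and two-variable polynomial identity lemmas -/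

lemma onevar_zero {n : ℕ} (c : Fin n → ℝ) {s : Set ℝ} (hs : s.Infinite)
    (h : ∀ x ∈ s, ∑ i, c i * x ^ (i : ℕ) = 0) : c = 0 := by
  classical
  set P : Polynomial ℝ := ∑ i : Fin n, Polynomial.C (c i) * Polynomial.X ^ (i : ℕ) with hP
  have hev : ∀ x, P.eval x = ∑ i : Fin n, c i * x ^ (i : ℕ) := by
    intro x
    simp [hP, Polynomial.eval_finset_sum]
  have hP0 : P = 0 := by
    apply Polynomial.eq_zero_of_infinite_isRoot
    apply hs.mono
    intro x hx
    simp only [Set.mem_setOf_eq, Polynomial.IsRoot, hev]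
    exact h x hx
  funext k
  have : P.coeff (k : ℕ) = c k := by
    rw [hP, Polynomial.finset_sum_coeff]
    rw [Finset.sum_eq_single k]
    · simp
    · intro i _ hik
      have : (i : ℕ) ≠ (k : ℕ) := fun hc => hik (Fin.ext hc)
      rw [Polynomial.coeff_C_mul, Polynomial.coeff_X_pow,
        if_neg (fun hc : (k:ℕ) = (i:ℕ) => this hc.symm), mul_zero]
    · simp
  rw [hP0] at this
  simpa using this.symm

abbrev Idx (l : ℕ) := Fin (l + 1) × Fin (l + 1)

lemma bivar_zero {l : ℕ} (b : Idx l → ℝ) {z : ℝ × ℝ} {ε : ℝ} (hε : 0 < ε)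
    (h : ∀ y ∈ Metric.ball z ε, ∑ q : Idx l, b q * (y.1 ^ (q.1 : ℕ) * y.2 ^ (q.2 : ℕ)) = 0) :
    b = 0 := by
  have hinf : (Metric.ball z.1 ε).Infinite := by
    rw [Real.ball_eq_Ioo]
    exact Set.Ioo_infinite (by linarith)
  have hinf2 : (Metric.ball z.2 ε).Infinite := by
    rw [Real.ball_eq_Ioo]
    exact Set.Ioo_infinite (by linarith)
  have key : ∀ i : Fin (l+1), ∀ x₂ ∈ Metric.ball z.2 ε,
      ∑ j : Fin (l+1), b (i, j) * x₂ ^ (j : ℕ) = 0 := by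
    intro i x₂ hx₂
    have h1 : ∀ x₁ ∈ Metric.ball z.1 ε,
        ∑ i : Fin (l+1), (∑ j : Fin (l+1), b (i, j) * x₂ ^ (j:ℕ)) * x₁ ^ (i:ℕ) = 0 := by
      intro x₁ hx₁
      have hmem : ((x₁, x₂) : ℝ × ℝ) ∈ Metric.ball z ε := by
        rw [← ball_prod_same]
        exact ⟨hx₁, hx₂⟩
      have := h (x₁, x₂) hmem
      rw [Fintype.sum_prod_type] at this
      rw [← this]
      congr 1
      funext i
      rw [Finset.sum_mul]
      congr 1
      funext j
      ring
    have h2 := onevar_zero (fun i : Fin (l+1) => ∑ j : Fin (l+1), b (i, j) * x₂ ^ (j:ℕ)) hinf h1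
    exact congrFun h2 i
  funext q
  have h3 := onevar_zero (fun j : Fin (l+1) => b (q.1, j)) hinf2 (key q.1)
  have := congrFun h3 q.2
  simpa using this

/-! ### Representations -/

lemma rep_of_isPolyDeg {l : ℕ} {v : ℝ × ℝ → ℝ} (hv : IsPolyDeg l v) :
    ∃ a : Idx l → ℝ, ∀ p : ℝ × ℝ, v p = ∑ q : Idx l, a q * (p.1 ^ (q.1 : ℕ) * p.2 ^ (q.2 : ℕ)) := by
  classical
  obtain ⟨P, hdeg, hv⟩ := hv
  set e : Idx l → (Fin 2 →₀ ℕ) := fun q =>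
    Finsupp.single 0 (q.1 : ℕ) + Finsupp.single 1 (q.2 : ℕ) with he
  have he0 : ∀ q, e q 0 = (q.1 : ℕ) := by intro q; simp [he]
  have he1 : ∀ q, e q 1 = (q.2 : ℕ) := by intro q; simp [he]
  have heinj : Function.Injective e := by
    intro q q' hqq
    have h0 : (q.1 : ℕ) = (q'.1 : ℕ) := by rw [← he0 q, ← he0 q', hqq]
    have h1 : (q.2 : ℕ) = (q'.2 : ℕ) := by rw [← he1 q, ← he1 q', hqq]
    exact Prod.ext (Fin.ext h0) (Fin.ext h1)
  have hsub : P.support ⊆ Finset.univ.image e := by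
    intro d hd
    have hle : ∀ i : Fin 2, d i ≤ l := by
      intro i
      refine le_trans ?_ (le_trans (MvPolynomial.le_totalDegree hd) hdeg)
      rw [Finsupp.sum]
      by_cases hdi : d i = 0
      · simp [hdi]
      · exact Finset.single_le_sum (fun j _ => Nat.zero_le (d j))
          (Finsupp.mem_support_iff.mpr hdi)
    have hd' : d = e (⟨d 0, Nat.lt_succ_of_le (hle 0)⟩, ⟨d 1, Nat.lt_succ_of_le (hle 1)⟩) := by
      ext i
      fin_cases i <;> simp [he]
    rw [hd']
    exact Finset.mem_image_of_mem e (Finset.mem_univ _)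
  refine ⟨fun q => P.coeff (e q), fun p => ?_⟩
  rw [hv p, MvPolynomial.eval_eq']
  rw [Finset.sum_subset hsub (by
    intro d _ hd
    rw [MvPolynomial.notMem_support_iff.mp hd, zero_mul])]
  rw [Finset.sum_image (fun q _ q' _ h => heinj h)]
  refine Finset.sum_congr rfl fun q _ => ?_
  congr 1
  rw [Fin.prod_univ_two]
  simp [he0, he1]

noncomputable def bcoef (c t : ℝ) (n k : ℕ) : ℝ :=
  if k ≤ n then t ^ k * c ^ (n - k) * (n.choose k) else 0

lemma binom_expand {l : ℕ} (c t : ℝ) {n : ℕ} (hn : n ≤ l) (x : ℝ) :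
    (c + t * x) ^ n = ∑ k : Fin (l + 1), bcoef c t n (k : ℕ) * x ^ (k : ℕ) := by
  rw [add_comm c (t * x), add_pow]
  rw [Fin.sum_univ_eq_sum_range (fun k => bcoef c t n k * x ^ k) (l+1)]
  rw [← Finset.sum_subset (Finset.range_subset_range.mpr (by omega) :
      Finset.range (n+1) ⊆ Finset.range (l+1))
    (by
      intro k _ hk
      rw [Finset.mem_range, Nat.lt_succ_iff, not_le] at hk
      rw [bcoef, if_neg (by omega), zero_mul])]
  refine Finset.sum_congr rfl fun k hk => ?_
  rw [Finset.mem_range, Nat.lt_succ_iff] at hk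
  rw [bcoef, if_pos hk, mul_pow]
  ring

lemma rep_comp_affine {l : ℕ} (a : Idx l → ℝ) (c : ℝ × ℝ) (t : ℝ) :
    ∃ b : Idx l → ℝ, ∀ y : ℝ × ℝ,
      ∑ q : Idx l, a q * ((c.1 + t * y.1) ^ (q.1 : ℕ) * (c.2 + t * y.2) ^ (q.2 : ℕ))
        = ∑ q : Idx l, b q * (y.1 ^ (q.1 : ℕ) * y.2 ^ (q.2 : ℕ)) := by
  refine ⟨fun p => ∑ q : Idx l,
      a q * (bcoef c.1 t (q.1 : ℕ) (p.1 : ℕ) * bcoef c.2 t (q.2 : ℕ) (p.2 : ℕ)), fun y => ?_⟩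
  have expand : ∀ q : Idx l,
      a q * ((c.1 + t * y.1) ^ (q.1 : ℕ) * (c.2 + t * y.2) ^ (q.2 : ℕ))
      = ∑ p : Idx l, a q * (bcoef c.1 t (q.1 : ℕ) (p.1 : ℕ) * bcoef c.2 t (q.2 : ℕ) (p.2 : ℕ))
          * (y.1 ^ (p.1 : ℕ) * y.2 ^ (p.2 : ℕ)) := by
    intro q
    rw [binom_expand c.1 t (Fin.is_le q.1) y.1, binom_expand c.2 t (Fin.is_le q.2) y.2,
      Finset.sum_mul_sum, Fintype.sum_prod_type, Finset.mul_sum]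
    refine Finset.sum_congr rfl fun k _ => ?_
    rw [Finset.mul_sum]
    refine Finset.sum_congr rfl fun m _ => ?_
    ring
  rw [Finset.sum_congr rfl fun q _ => expand q, Finset.sum_comm]
  refine Finset.sum_congr rfl fun p _ => ?_
  rw [Finset.sum_mul]

/-! ### The polynomial family and its derivatives -/

noncomputable def Pb {l : ℕ} (b : Idx l → ℝ) : ℝ × ℝ → ℝ :=
  fun y => ∑ q : Idx l, b q * (y.1 ^ (q.1 : ℕ) * y.2 ^ (q.2 : ℕ))

noncomputable def monoD {l : ℕ} (q : Idx l) (y : ℝ × ℝ) : ℝ × ℝ →L[ℝ] ℝ :=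
  y.1 ^ (q.1 : ℕ) • ((((q.2 : ℕ) : ℝ) * y.2 ^ ((q.2 : ℕ) - 1)) • ContinuousLinearMap.snd ℝ ℝ ℝ)
  + y.2 ^ (q.2 : ℕ) • ((((q.1 : ℕ) : ℝ) * y.1 ^ ((q.1 : ℕ) - 1)) • ContinuousLinearMap.fst ℝ ℝ ℝ)

lemma hasFDerivAt_mono {l : ℕ} (q : Idx l) (y : ℝ × ℝ) :
    HasFDerivAt (fun y : ℝ × ℝ => y.1 ^ (q.1 : ℕ) * y.2 ^ (q.2 : ℕ)) (monoD q y) y := by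
  have h1 : HasFDerivAt (fun y : ℝ × ℝ => y.1 ^ (q.1 : ℕ))
      (((((q.1 : ℕ)) : ℝ) * y.1 ^ ((q.1 : ℕ) - 1)) • ContinuousLinearMap.fst ℝ ℝ ℝ) y :=
    (hasDerivAt_pow (q.1 : ℕ) y.1).comp_hasFDerivAt y hasFDerivAt_fst
  have h2 : HasFDerivAt (fun y : ℝ × ℝ => y.2 ^ (q.2 : ℕ))
      (((((q.2 : ℕ)) : ℝ) * y.2 ^ ((q.2 : ℕ) - 1)) • ContinuousLinearMap.snd ℝ ℝ ℝ) y :=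
    (hasDerivAt_pow (q.2 : ℕ) y.2).comp_hasFDerivAt y hasFDerivAt_snd
  exact h1.mul h2

noncomputable def PbD {l : ℕ} (b : Idx l → ℝ) (y : ℝ × ℝ) : ℝ × ℝ →L[ℝ] ℝ :=
  ∑ q : Idx l, b q • monoD q y

lemma hasFDerivAt_Pb {l : ℕ} (b : Idx l → ℝ) (y : ℝ × ℝ) :
    HasFDerivAt (Pb b) (PbD b y) y := by
  apply HasFDerivAt.fun_sum
  intro q _
  exact (hasFDerivAt_mono q y).const_mul (b q)

lemma pdr_Pb {l : ℕ} (b : Idx l → ℝ) (y : ℝ × ℝ) :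
    pdr (Pb b) y = ∑ q : Idx l,
      b q * (y.2 ^ (q.2 : ℕ) * (((q.1 : ℕ) : ℝ) * y.1 ^ ((q.1 : ℕ) - 1))) := by
  rw [pdr, (hasFDerivAt_Pb b y).fderiv, PbD]
  simp [monoD, ContinuousLinearMap.sum_apply]

lemma pdz_Pb {l : ℕ} (b : Idx l → ℝ) (y : ℝ × ℝ) :
    pdz (Pb b) y = ∑ q : Idx l,
      b q * (y.1 ^ (q.1 : ℕ) * (((q.2 : ℕ) : ℝ) * y.2 ^ ((q.2 : ℕ) - 1))) := by
  rw [pdz, (hasFDerivAt_Pb b y).fderiv, PbD]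
  simp [monoD, ContinuousLinearMap.sum_apply]

lemma continuous_Pb {l : ℕ} (b : Idx l → ℝ) : Continuous (Pb b) := by
  unfold Pb
  fun_prop

lemma pdr_scale {l : ℕ} (a b : Idx l → ℝ) (c : ℝ × ℝ) (t : ℝ)
    (hab : ∀ z : ℝ × ℝ, Pb b z = Pb a (c + t • z)) (y : ℝ × ℝ) :
    pdr (Pb b) y = t * pdr (Pb a) (c + t • y) ∧
    pdz (Pb b) y = t * pdz (Pb a) (c + t • y) := by
  have haff : HasFDerivAt (fun z : ℝ × ℝ => c + t • z)
      (t • ContinuousLinearMap.id ℝ (ℝ × ℝ)) y :=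
    ((hasFDerivAt_id y).const_smul t).const_add c
  have hcomp : HasFDerivAt (fun z : ℝ × ℝ => Pb a (c + t • z))
      ((PbD a (c + t • y)).comp (t • ContinuousLinearMap.id ℝ (ℝ × ℝ))) y :=
    by have h := (hasFDerivAt_Pb a (c + t • y)).comp y haff; exact h
  rw [← funext hab] at hcomp
  have hfd := hcomp.fderiv
  have hfa := (hasFDerivAt_Pb a (c + t • y)).fderiv
  constructor
  · rw [pdr, hfd, pdr, hfa]
    simp [ContinuousLinearMap.comp_apply, ContinuousLinearMap.map_smul, smul_eq_mul]
  · rw [pdz, hfd, pdz, hfa]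
    simp [ContinuousLinearMap.comp_apply, ContinuousLinearMap.map_smul, smul_eq_mul]

/-! ### The reference quadratic form -/

noncomputable def gq {l : ℕ} (b : Idx l → ℝ) : ℝ :=
  ∫ z in closedBall (0 : ℝ × ℝ) 1, (Pb b z) ^ 2 * (1 + z.1)

noncomputable def Mmat (l : ℕ) (p : Idx l × Idx l) : ℝ :=
  ∫ z in closedBall (0 : ℝ × ℝ) 1,
    (z.1 ^ (p.1.1 : ℕ) * z.2 ^ (p.1.2 : ℕ)) * (z.1 ^ (p.2.1 : ℕ) * z.2 ^ (p.2.2 : ℕ)) * (1 + z.1)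

lemma gq_expand {l : ℕ} (b : Idx l → ℝ) :
    gq b = ∑ p : Idx l × Idx l, b p.1 * b p.2 * Mmat l p := by
  unfold gq Mmat
  have hpt : ∀ z : ℝ × ℝ, (Pb b z) ^ 2 * (1 + z.1) = ∑ p : Idx l × Idx l,
      b p.1 * b p.2 * ((z.1 ^ (p.1.1 : ℕ) * z.2 ^ (p.1.2 : ℕ))
        * (z.1 ^ (p.2.1 : ℕ) * z.2 ^ (p.2.2 : ℕ)) * (1 + z.1)) := by
    intro z
    conv_rhs => rw [Fintype.sum_prod_type]
    rw [pow_two, Pb, Finset.sum_mul_sum]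
    simp only [Finset.sum_mul]
    exact Finset.sum_congr rfl fun q _ => Finset.sum_congr rfl fun q' _ => by ring
  simp_rw [hpt]
  rw [integral_finset_sum]
  · refine Finset.sum_congr rfl fun p _ => ?_
    rw [integral_const_mul]
  · intro p _
    have hc : Continuous fun z : ℝ × ℝ =>
        b p.1 * b p.2 * ((z.1 ^ (p.1.1 : ℕ) * z.2 ^ (p.1.2 : ℕ))
          * (z.1 ^ (p.2.1 : ℕ) * z.2 ^ (p.2.2 : ℕ)) * (1 + z.1)) := by fun_prop
    exact hc.continuousOn.integrableOn_compact (isCompact_closedBall _ _)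

lemma gq_smul {l : ℕ} (s : ℝ) (b : Idx l → ℝ) : gq (s • b) = s ^ 2 * gq b := by
  rw [gq_expand, gq_expand, Finset.mul_sum]
  refine Finset.sum_congr rfl fun p _ => ?_
  simp only [Pi.smul_apply, smul_eq_mul]
  ring

lemma continuous_gq {l : ℕ} : Continuous (gq (l := l)) := by
  have : gq (l := l) = fun b => ∑ p : Idx l × Idx l, b p.1 * b p.2 * Mmat l p :=
    funext gq_expand
  rw [this]
  exact continuous_finset_sum _ fun p _ =>
    ((continuous_apply p.1).mul (continuous_apply p.2)).mul continuous_const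

lemma gq_nonneg {l : ℕ} (b : Idx l → ℝ) : 0 ≤ gq b := by
  refine setIntegral_nonneg measurableSet_closedBall fun z hz => ?_
  have h1 : |z.1| ≤ ‖z‖ := by
    rw [← Real.norm_eq_abs]; exact norm_fst_le z
  have h2 : ‖z‖ ≤ 1 := by rwa [← mem_closedBall_zero_iff]
  have : (0:ℝ) ≤ 1 + z.1 := by
    have := abs_le.mp (h1.trans h2)
    linarith [this.1]
  positivity

lemma gq_pos {l : ℕ} (b : Idx l → ℝ) (hb : b ≠ 0) : 0 < gq b := by
  have hne : ∃ z₀ ∈ Metric.ball (0 : ℝ × ℝ) (1/2), Pb b z₀ ≠ 0 := by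
    by_contra h
    push_neg at h
    exact hb (bivar_zero b (by norm_num : (0:ℝ) < 1/2) fun y hy => h y hy)
  obtain ⟨z₀, hz₀, hPz₀⟩ := hne
  rw [gq, setIntegral_pos_iff_support_of_nonneg_ae]
  · set U := Metric.ball (0 : ℝ × ℝ) (1/2) ∩ {z | Pb b z ≠ 0} with hU
    have hUopen : IsOpen U :=
      Metric.isOpen_ball.inter (isOpen_ne.preimage (continuous_Pb b))
    have hUne : U.Nonempty := ⟨z₀, hz₀, hPz₀⟩
    refine lt_of_lt_of_le (hUopen.measure_pos volume hUne) (measure_mono ?_)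
    rintro z ⟨hz1, hz2⟩
    have hzn : ‖z‖ < 1/2 := mem_ball_zero_iff.mp hz1
    have h1 : |z.1| ≤ ‖z‖ := by rw [← Real.norm_eq_abs]; exact norm_fst_le z
    have hpos : (0:ℝ) < 1 + z.1 := by
      have := abs_le.mp (h1.trans hzn.le)
      linarith [this.1]
    constructor
    · simp only [Function.mem_support]
      exact mul_ne_zero (pow_ne_zero _ hz2) hpos.ne'
    · exact mem_closedBall_zero_iff.mpr (by linarith)
  · filter_upwards [ae_restrict_mem measurableSet_closedBall] with z hz
    have h1 : |z.1| ≤ ‖z‖ := by rw [← Real.norm_eq_abs]; exact norm_fst_le z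
    have h2 : ‖z‖ ≤ 1 := mem_closedBall_zero_iff.mp hz
    have : (0:ℝ) ≤ 1 + z.1 := by
      have := abs_le.mp (h1.trans h2); linarith [this.1]
    positivity
  · have hc : Continuous fun z : ℝ × ℝ => (Pb b z) ^ 2 * (1 + z.1) :=
      ((continuous_Pb b).pow 2).mul (by fun_prop)
    exact hc.continuousOn.integrableOn_compact (isCompact_closedBall _ _)

lemma gq_lower {l : ℕ} : ∃ m : ℝ, 0 < m ∧ ∀ b : Idx l → ℝ, m * ‖b‖ ^ 2 ≤ gq b := by
  obtain ⟨u, huS, humin⟩ := (isCompact_sphere (0 : Idx l → ℝ) 1).exists_isMinOn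
    (NormedSpace.sphere_nonempty.mpr zero_le_one) continuous_gq.continuousOn
  have hu1 : ‖u‖ = 1 := mem_sphere_zero_iff_norm.mp huS
  have hu0 : u ≠ 0 := fun h => by simp [h] at hu1
  refine ⟨gq u, gq_pos u hu0, fun b => ?_⟩
  rcases eq_or_ne b 0 with rfl | hb
  · simp [gq_nonneg]
  · have hnb : (0:ℝ) < ‖b‖ := norm_pos_iff.mpr hb
    have hmem : ‖b‖⁻¹ • b ∈ Metric.sphere (0 : Idx l → ℝ) 1 := by
      rw [mem_sphere_zero_iff_norm, norm_smul, norm_inv, norm_norm,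
        inv_mul_cancel₀ hnb.ne']
    have h1 := humin hmem
    have h2 : gq b = ‖b‖ ^ 2 * gq (‖b‖⁻¹ • b) := by
      rw [← gq_smul]
      congr 1
      rw [smul_smul, mul_inv_cancel₀ hnb.ne', one_smul]
    rw [h2]
    have := mul_le_mul_of_nonneg_left h1 (by positivity : (0:ℝ) ≤ ‖b‖ ^ 2)
    calc gq u * ‖b‖ ^ 2 = ‖b‖ ^ 2 * gq u := by ring
    _ ≤ ‖b‖ ^ 2 * gq (‖b‖⁻¹ • b) := this

/-! ### The core reference estimate -/

lemma core {l : ℕ} {σ : ℝ} (hσ : 0 < σ) :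
    ∃ C₀ : ℝ, 0 < C₀ ∧ ∀ b : Idx l → ℝ, ∀ y ∈ closedBall (0 : ℝ × ℝ) (2 * σ),
      (pdr (Pb b) y) ^ 2 + (pdz (Pb b) y) ^ 2 ≤ C₀ * gq b := by
  obtain ⟨m, hm, hmle⟩ := gq_lower (l := l)
  set B : ℝ := ((l : ℝ) + 1) ^ 3 * (1 + 2 * σ) ^ (2 * l) with hB
  have hBpos : 0 < B := by positivity
  refine ⟨2 * B ^ 2 / m, by positivity, fun b y hy => ?_⟩
  have hy' : ‖y‖ ≤ 2 * σ := mem_closedBall_zero_iff.mp hy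
  have base1 : (1 : ℝ) ≤ 1 + 2 * σ := by linarith
  have hy1 : |y.1| ≤ 1 + 2 * σ := by
    have : |y.1| ≤ ‖y‖ := by rw [← Real.norm_eq_abs]; exact norm_fst_le y
    linarith
  have hy2 : |y.2| ≤ 1 + 2 * σ := by
    have : |y.2| ≤ ‖y‖ := by rw [← Real.norm_eq_abs]; exact norm_snd_le y
    linarith
  have hterm : ∀ (u v : ℝ) (i j : Fin (l + 1)), |u| ≤ 1 + 2 * σ → |v| ≤ 1 + 2 * σ →
      |v ^ (j : ℕ) * (((i : ℕ) : ℝ) * u ^ ((i : ℕ) - 1))|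
        ≤ ((l : ℝ) + 1) * (1 + 2 * σ) ^ (2 * l) := by
    intro u v i j hu hv
    rw [abs_mul, abs_mul, abs_pow, abs_pow]
    have h1 : |v| ^ (j : ℕ) ≤ (1 + 2 * σ) ^ (j : ℕ) :=
      pow_le_pow_left₀ (abs_nonneg _) hv _
    have h2 : |u| ^ ((i : ℕ) - 1) ≤ (1 + 2 * σ) ^ ((i : ℕ) - 1) :=
      pow_le_pow_left₀ (abs_nonneg _) hu _
    have h3 : |((i : ℕ) : ℝ)| ≤ (l : ℝ) + 1 := by
      rw [abs_of_nonneg (by positivity)]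
      exact_mod_cast Nat.le_of_lt_succ i.isLt |>.trans (Nat.le_succ l)
    have h4 : (1 + 2 * σ) ^ ((j : ℕ) + ((i : ℕ) - 1)) ≤ (1 + 2 * σ) ^ (2 * l) := by
      apply pow_le_pow_right₀ base1
      have := Nat.le_of_lt_succ i.isLt
      have := Nat.le_of_lt_succ j.isLt
      omega
    calc |v| ^ (j : ℕ) * (|((i : ℕ) : ℝ)| * |u| ^ ((i : ℕ) - 1))
        ≤ (1 + 2 * σ) ^ (j : ℕ) * (((l : ℝ) + 1) * (1 + 2 * σ) ^ ((i : ℕ) - 1)) := by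
          apply mul_le_mul h1 (mul_le_mul h3 h2 (by positivity) (by positivity))
            (by positivity) (by positivity)
      _ = ((l : ℝ) + 1) * (1 + 2 * σ) ^ ((j : ℕ) + ((i : ℕ) - 1)) := by
          rw [pow_add]; ring
      _ ≤ ((l : ℝ) + 1) * (1 + 2 * σ) ^ (2 * l) := by
          exact mul_le_mul_of_nonneg_left h4 (by positivity)
  have habs : ∀ q : Idx l, |b q| ≤ ‖b‖ := fun q => by
    rw [← Real.norm_eq_abs]; exact norm_le_pi_norm b q
  have hcard : (Fintype.card (Idx l) : ℝ) = ((l : ℝ) + 1) ^ 2 := by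
    simp [Fintype.card_prod, Fintype.card_fin]
    ring
  have hpdr : |pdr (Pb b) y| ≤ B * ‖b‖ := by
    rw [pdr_Pb]
    refine (Finset.abs_sum_le_sum_abs _ _).trans ?_
    calc ∑ q : Idx l, |b q * (y.2 ^ (q.2 : ℕ) * (((q.1 : ℕ) : ℝ) * y.1 ^ ((q.1 : ℕ) - 1)))|
        ≤ ∑ _q : Idx l, ‖b‖ * (((l : ℝ) + 1) * (1 + 2 * σ) ^ (2 * l)) := by
          refine Finset.sum_le_sum fun q _ => ?_
          rw [abs_mul]
          exact mul_le_mul (habs q) (hterm y.1 y.2 q.1 q.2 hy1 hy2) (abs_nonneg _)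
            (norm_nonneg _)
      _ = B * ‖b‖ := by
          rw [Finset.sum_const, Finset.card_univ, nsmul_eq_mul, hcard, hB]
          ring
  have hpdz : |pdz (Pb b) y| ≤ B * ‖b‖ := by
    rw [pdz_Pb]
    refine (Finset.abs_sum_le_sum_abs _ _).trans ?_
    calc ∑ q : Idx l, |b q * (y.1 ^ (q.1 : ℕ) * (((q.2 : ℕ) : ℝ) * y.2 ^ ((q.2 : ℕ) - 1)))|
        ≤ ∑ _q : Idx l, ‖b‖ * (((l : ℝ) + 1) * (1 + 2 * σ) ^ (2 * l)) := by
          refine Finset.sum_le_sum fun q _ => ?_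
          rw [abs_mul]
          exact mul_le_mul (habs q) (hterm y.2 y.1 q.2 q.1 hy2 hy1) (abs_nonneg _)
            (norm_nonneg _)
      _ = B * ‖b‖ := by
          rw [Finset.sum_const, Finset.card_univ, nsmul_eq_mul, hcard, hB]
          ring
  have h1 : (pdr (Pb b) y) ^ 2 ≤ (B * ‖b‖) ^ 2 := by
    rw [← sq_abs]
    exact pow_le_pow_left₀ (abs_nonneg _) hpdr 2
  have h2 : (pdz (Pb b) y) ^ 2 ≤ (B * ‖b‖) ^ 2 := by
    rw [← sq_abs]
    exact pow_le_pow_left₀ (abs_nonneg _) hpdz 2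
  have h3 : 2 * B ^ 2 / m * (m * ‖b‖ ^ 2) ≤ 2 * B ^ 2 / m * gq b :=
    mul_le_mul_of_nonneg_left (hmle b) (by positivity)
  have heq : 2 * B ^ 2 / m * (m * ‖b‖ ^ 2) = 2 * (B * ‖b‖) ^ 2 := by
    field_simp
  linarith

/-! ### Change of variables and volume bounds -/

lemma finrank2 : Module.finrank ℝ (ℝ × ℝ) = 2 := by
  simp [Module.finrank_prod]

lemma cov (g : ℝ × ℝ → ℝ) (c : ℝ × ℝ) {t : ℝ} (ht : 0 < t) :
    ∫ x in closedBall c t, g x = t ^ 2 * ∫ y in closedBall (0 : ℝ × ℝ) 1, g (c + t • y) := by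
  have h2 : t • closedBall (0 : ℝ × ℝ) 1 = closedBall (0 : ℝ × ℝ) t := by
    rw [_root_.smul_closedBall _ _ zero_le_one, smul_zero, Real.norm_eq_abs,
      abs_of_pos ht, mul_one]
  have h1 : ∫ y in closedBall (0 : ℝ × ℝ) 1, g (c + t • y)
      = (t ^ 2)⁻¹ * ∫ x in closedBall (0 : ℝ × ℝ) t, g (c + x) := by
    have := Measure.setIntegral_comp_smul_of_pos (volume : Measure (ℝ × ℝ))
      (fun x => g (c + x)) (closedBall (0 : ℝ × ℝ) 1) ht
    rw [finrank2, h2, smul_eq_mul] at this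
    exact this
  have h3 : ∫ x in closedBall (0 : ℝ × ℝ) t, g (c + x) = ∫ x in closedBall c t, g x := by
    have hmp : MeasurePreserving (fun x : ℝ × ℝ => c + x) volume volume :=
      measurePreserving_add_left volume c
    have hemb : MeasurableEmbedding (fun x : ℝ × ℝ => c + x) :=
      (MeasurableEquiv.addLeft c).measurableEmbedding
    have hpre : (fun x : ℝ × ℝ => c + x) ⁻¹' closedBall c t = closedBall (0 : ℝ × ℝ) t := by
      ext x
      simp [mem_closedBall, dist_eq_norm]
    rw [← hpre, hmp.setIntegral_preimage_emb hemb]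
  rw [h1, h3]
  have ht2 : (t : ℝ) ^ 2 ≠ 0 := by positivity
  field_simp

lemma vol_ball_le (c : ℝ × ℝ) {h : ℝ} (hh : 0 ≤ h) :
    (volume (closedBall c h)).toReal ≤ 4 * h ^ 2 := by
  rw [← closedBall_prod_same]
  rw [show (volume : Measure (ℝ × ℝ)) = (volume : Measure ℝ).prod volume from rfl]
  rw [Measure.prod_prod, Real.volume_closedBall, Real.volume_closedBall]
  rw [← ENNReal.ofReal_mul (by linarith)]
  rw [ENNReal.toReal_ofReal (by nlinarith)]
  nlinarith

end WIE

set_option maxHeartbeats 1000000 in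
/-- Weighted inverse estimate for gradients: there is `C = C(l, σ)` such that for every
nondegenerate shape-regular triangle `K ⊂ {r ≥ 0}` and every polynomial `v` of degree
`≤ l`, `∫_K |∇v|² r dr dz ≤ C h_K⁻² ∫_K v² r dr dz`. -/
theorem weighted_inverse_estimate_grad (l : ℕ) (σ : ℝ) (hσ : 0 < σ) :
    ∃ C : ℝ, 0 < C ∧
      ∀ A B D : ℝ × ℝ, ¬ Collinear ℝ ({A, B, D} : Set (ℝ × ℝ)) →
        (∀ x ∈ convexHull ℝ ({A, B, D} : Set (ℝ × ℝ)), 0 ≤ x.1) →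
        (∃ c : ℝ × ℝ, ∃ t : ℝ, 0 < t ∧
          Metric.closedBall c t ⊆ convexHull ℝ ({A, B, D} : Set (ℝ × ℝ)) ∧
          Metric.diam (convexHull ℝ ({A, B, D} : Set (ℝ × ℝ))) ≤ σ * (2 * t)) →
        ∀ v : ℝ × ℝ → ℝ, IsPolyDeg l v →
          (∫ p in convexHull ℝ ({A, B, D} : Set (ℝ × ℝ)),
              ((pdr v p) ^ 2 + (pdz v p) ^ 2) * p.1)
            ≤ C / (Metric.diam (convexHull ℝ ({A, B, D} : Set (ℝ × ℝ)))) ^ 2 *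
                ∫ p in convexHull ℝ ({A, B, D} : Set (ℝ × ℝ)), (v p) ^ 2 * p.1 := by
  classical
  obtain ⟨C₀, hC₀, hcore⟩ := WIE.core (l := l) hσ
  refine ⟨128 * σ ^ 4 * (1 + 2 * σ) * C₀, by positivity, ?_⟩
  rintro A B D _hcol hpos ⟨c, t, ht, hball, hdiam⟩ v hv
  set K := convexHull ℝ ({A, B, D} : Set (ℝ × ℝ)) with hKdef
  set h := Metric.diam K with hhdef
  -- basic geometry
  have hKfin : Set.Finite ({A, B, D} : Set (ℝ × ℝ)) :=
    Set.Finite.insert A (Set.Finite.insert B (Set.finite_singleton D))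
  have hKcompact : IsCompact K := hKfin.isCompact_convexHull ℝ
  have hKmeas : MeasurableSet K := hKcompact.measurableSet
  have hKbd : Bornology.IsBounded K := hKcompact.isBounded
  have hcK : c ∈ K := hball (Metric.mem_closedBall_self ht.le)
  have hmemball : ∀ s : ℝ, |s| ≤ t → ((c.1 + s, c.2) : ℝ × ℝ) ∈ Metric.closedBall c t := by
    intro s hs
    rw [Metric.mem_closedBall, Prod.dist_eq]
    simp [Real.dist_eq, hs]
  have h2t : 2 * t ≤ h := by
    have hp1 : ((c.1 + t, c.2) : ℝ × ℝ) ∈ K := hball (hmemball t (by rw [abs_of_pos ht]))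
    have hp2 : ((c.1 + -t, c.2) : ℝ × ℝ) ∈ K := hball (hmemball (-t) (by rw [abs_neg, abs_of_pos ht]))
    have hd := Metric.dist_le_diam_of_mem hKbd hp1 hp2
    rw [Prod.dist_eq] at hd
    simp only [Real.dist_eq] at hd
    have : |c.1 + t - (c.1 + -t)| = 2 * t := by
      rw [show c.1 + t - (c.1 + -t) = 2 * t by ring, abs_of_pos (by linarith)]
    rw [this] at hd
    simpa using le_trans (le_max_left _ _) hd
  have hhpos : 0 < h := lt_of_lt_of_le (by linarith) h2t
  have hct : t ≤ c.1 := by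
    have hmem : ((c.1 + -t, c.2) : ℝ × ℝ) ∈ Metric.closedBall c t :=
      hmemball (-t) (by rw [abs_neg, abs_of_pos ht])
    have := hpos _ (hball hmem)
    simpa using this
  have hcpos : 0 < c.1 := lt_of_lt_of_le ht hct
  have hht : h ≤ 2 * σ * t := by linarith [hdiam]
  have hKsub : K ⊆ Metric.closedBall c h := fun p hp =>
    Metric.mem_closedBall.mpr (Metric.dist_le_diam_of_mem hKbd hp hcK)
  -- representations
  obtain ⟨a, ha⟩ := WIE.rep_of_isPolyDeg hv
  have hveq : v = WIE.Pb a := funext fun p => ha p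
  obtain ⟨b, hb⟩ := WIE.rep_comp_affine a c t
  have hwb : ∀ z : ℝ × ℝ, WIE.Pb b z = WIE.Pb a (c + t • z) := by
    intro z
    simp only [WIE.Pb]
    rw [← hb z]
    simp only [Prod.fst_add, Prod.snd_add, Prod.smul_fst, Prod.smul_snd, smul_eq_mul]
  set G := WIE.gq b with hG
  have hGnn : 0 ≤ G := WIE.gq_nonneg b
  -- gradient bound on K
  have hgradbd : ∀ p ∈ K,
      ((pdr v p) ^ 2 + (pdz v p) ^ 2) * p.1 ≤ (t⁻¹) ^ 2 * (C₀ * G) * (c.1 + h) := by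
    intro p hp
    set y : ℝ × ℝ := t⁻¹ • (p - c) with hy
    have hyp : c + t • y = p := by
      rw [hy, smul_smul, mul_inv_cancel₀ ht.ne', one_smul]
      abel
    have hynorm : ‖y‖ ≤ 2 * σ := by
      have hd : ‖p - c‖ ≤ h := by
        rw [← dist_eq_norm]
        exact Metric.dist_le_diam_of_mem hKbd hp hcK
      have : ‖y‖ = t⁻¹ * ‖p - c‖ := by
        rw [hy, norm_smul, Real.norm_eq_abs, abs_of_pos (inv_pos.mpr ht)]
      rw [this]
      rw [inv_mul_le_iff₀ ht]
      calc ‖p - c‖ ≤ h := hd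
        _ ≤ 2 * σ * t := hht
        _ = t * (2 * σ) := by ring
    have hymem : y ∈ Metric.closedBall (0 : ℝ × ℝ) (2 * σ) :=
      mem_closedBall_zero_iff.mpr hynorm
    obtain ⟨hsc1, hsc2⟩ := WIE.pdr_scale a b c t hwb y
    rw [hyp] at hsc1 hsc2
    have hpdrv : pdr v p = t⁻¹ * pdr (WIE.Pb b) y := by
      rw [hveq, hsc1]
      field_simp
    have hpdzv : pdz v p = t⁻¹ * pdz (WIE.Pb b) y := by
      rw [hveq, hsc2]
      field_simp
    have hcore' := hcore b y hymem
    have hp1 : 0 ≤ p.1 := hpos p hp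
    have hp1' : p.1 ≤ c.1 + h := by
      have hd : dist p c ≤ h := Metric.dist_le_diam_of_mem hKbd hp hcK
      have : |p.1 - c.1| ≤ dist p c := by
        rw [Prod.dist_eq, Real.dist_eq]
        exact le_max_left _ _
      have := abs_le.mp (this.trans hd)
      linarith [this.1]
    have hsq : (pdr v p) ^ 2 + (pdz v p) ^ 2 ≤ (t⁻¹) ^ 2 * (C₀ * G) := by
      rw [hpdrv, hpdzv]
      have ht2 : (0:ℝ) ≤ (t⁻¹) ^ 2 := by positivity
      calc (t⁻¹ * pdr (WIE.Pb b) y) ^ 2 + (t⁻¹ * pdz (WIE.Pb b) y) ^ 2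
          = (t⁻¹) ^ 2 * ((pdr (WIE.Pb b) y) ^ 2 + (pdz (WIE.Pb b) y) ^ 2) := by ring
        _ ≤ (t⁻¹) ^ 2 * (C₀ * G) := mul_le_mul_of_nonneg_left hcore' ht2
    calc ((pdr v p) ^ 2 + (pdz v p) ^ 2) * p.1
        ≤ ((t⁻¹) ^ 2 * (C₀ * G)) * (c.1 + h) := by
          apply mul_le_mul hsq hp1' hp1
          positivity
      _ = (t⁻¹) ^ 2 * (C₀ * G) * (c.1 + h) := by ring
  -- continuity facts
  have hcontgrad : Continuous fun p : ℝ × ℝ => ((pdr v p) ^ 2 + (pdz v p) ^ 2) * p.1 := by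
    rw [hveq]
    have h1 : pdr (WIE.Pb a) = fun p : ℝ × ℝ => ∑ q : WIE.Idx l,
        a q * (p.2 ^ (q.2 : ℕ) * (((q.1 : ℕ) : ℝ) * p.1 ^ ((q.1 : ℕ) - 1))) :=
      funext (WIE.pdr_Pb a)
    have h2 : pdz (WIE.Pb a) = fun p : ℝ × ℝ => ∑ q : WIE.Idx l,
        a q * (p.1 ^ (q.1 : ℕ) * (((q.2 : ℕ) : ℝ) * p.2 ^ ((q.2 : ℕ) - 1))) :=
      funext (WIE.pdz_Pb a)
    rw [h1, h2]
    fun_prop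
  have hcontv2 : Continuous fun p : ℝ × ℝ => (v p) ^ 2 * p.1 := by
    rw [hveq]
    exact ((WIE.continuous_Pb a).pow 2).mul continuous_fst
  -- LHS upper bound
  have hvolK : (volume K).toReal ≤ 4 * h ^ 2 := by
    refine le_trans (ENNReal.toReal_mono ?_ (measure_mono hKsub)) (WIE.vol_ball_le c hhpos.le)
    exact (isCompact_closedBall c h).measure_lt_top.ne
  have hM : (0:ℝ) ≤ (t⁻¹) ^ 2 * (C₀ * G) * (c.1 + h) := by positivity
  have hLHS : (∫ p in K, ((pdr v p) ^ 2 + (pdz v p) ^ 2) * p.1)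
      ≤ (t⁻¹) ^ 2 * (C₀ * G) * (c.1 + h) * (4 * h ^ 2) := by
    have hnorm : ∀ p ∈ K, ‖((pdr v p) ^ 2 + (pdz v p) ^ 2) * p.1‖
        ≤ (t⁻¹) ^ 2 * (C₀ * G) * (c.1 + h) := by
      intro p hp
      rw [Real.norm_eq_abs, abs_of_nonneg (mul_nonneg (by positivity) (hpos p hp))]
      exact hgradbd p hp
    calc (∫ p in K, ((pdr v p) ^ 2 + (pdz v p) ^ 2) * p.1)
        ≤ ‖∫ p in K, ((pdr v p) ^ 2 + (pdz v p) ^ 2) * p.1‖ := le_abs_self _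
      _ ≤ (t⁻¹) ^ 2 * (C₀ * G) * (c.1 + h) * (volume K).toReal :=
          norm_setIntegral_le_of_norm_le_const hKcompact.measure_lt_top hnorm
      _ ≤ (t⁻¹) ^ 2 * (C₀ * G) * (c.1 + h) * (4 * h ^ 2) :=
          mul_le_mul_of_nonneg_left hvolK hM
  -- RHS lower bound
  have hIK : IntegrableOn (fun p : ℝ × ℝ => (v p) ^ 2 * p.1) K :=
    hcontv2.continuousOn.integrableOn_compact hKcompact
  have hmono1 : (∫ p in Metric.closedBall c t, (v p) ^ 2 * p.1)
      ≤ ∫ p in K, (v p) ^ 2 * p.1 := by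
    refine setIntegral_mono_set hIK ?_ (HasSubset.Subset.eventuallyLE hball)
    filter_upwards [ae_restrict_mem hKmeas] with p hp
    exact mul_nonneg (sq_nonneg _) (hpos p hp)
  have hcov := WIE.cov (fun p : ℝ × ℝ => (v p) ^ 2 * p.1) c ht
  have hptw : ∀ y ∈ Metric.closedBall (0 : ℝ × ℝ) 1,
      c.1 / 2 * ((WIE.Pb b y) ^ 2 * (1 + y.1)) ≤ (v (c + t • y)) ^ 2 * (c + t • y).1 := by
    intro y hy
    have hyn : ‖y‖ ≤ 1 := mem_closedBall_zero_iff.mp hy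
    have hy1 : |y.1| ≤ 1 := by
      have : |y.1| ≤ ‖y‖ := by rw [← Real.norm_eq_abs]; exact norm_fst_le y
      linarith
    have hvy : v (c + t • y) = WIE.Pb b y := by
      rw [hveq, hwb]
    have hfst : (c + t • y).1 = c.1 + t * y.1 := rfl
    rw [hvy, hfst]
    have hy1a := abs_le.mp hy1
    nlinarith [sq_nonneg (WIE.Pb b y), mul_nonneg (sub_nonneg.mpr hct)
        (by linarith [hy1a.2] : (0:ℝ) ≤ 1 - y.1),
      mul_nonneg ht.le (by linarith [hy1a.1] : (0:ℝ) ≤ 1 + y.1),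
      mul_nonneg (mul_nonneg (sub_nonneg.mpr hct)
        (by linarith [hy1a.2] : (0:ℝ) ≤ 1 - y.1)) (sq_nonneg (WIE.Pb b y)),
      mul_nonneg (mul_nonneg ht.le (by linarith [hy1a.1] : (0:ℝ) ≤ 1 + y.1))
        (sq_nonneg (WIE.Pb b y))]
  have hmono2 : c.1 / 2 * G ≤ ∫ y in Metric.closedBall (0 : ℝ × ℝ) 1,
      (v (c + t • y)) ^ 2 * (c + t • y).1 := by
    have hexp : c.1 / 2 * G = ∫ y in Metric.closedBall (0 : ℝ × ℝ) 1,
        c.1 / 2 * ((WIE.Pb b y) ^ 2 * (1 + y.1)) := by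
      rw [hG, WIE.gq, integral_const_mul]
    rw [hexp]
    refine setIntegral_mono_on ?_ ?_ measurableSet_closedBall hptw
    · have hc : Continuous fun y : ℝ × ℝ => c.1 / 2 * ((WIE.Pb b y) ^ 2 * (1 + y.1)) := by
        have := WIE.continuous_Pb b
        fun_prop
      exact hc.continuousOn.integrableOn_compact (isCompact_closedBall _ _)
    · have hc : Continuous fun y : ℝ × ℝ => (v (c + t • y)) ^ 2 * (c + t • y).1 := by
        rw [hveq]
        have h1 : Continuous fun y : ℝ × ℝ => c + t • y := by fun_prop
        exact ((( WIE.continuous_Pb a).comp h1).pow 2).mul (continuous_fst.comp h1)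
      exact hc.continuousOn.integrableOn_compact (isCompact_closedBall _ _)
  have hRHS : t ^ 2 * (c.1 / 2 * G) ≤ ∫ p in K, (v p) ^ 2 * p.1 := by
    calc t ^ 2 * (c.1 / 2 * G)
        ≤ t ^ 2 * ∫ y in Metric.closedBall (0 : ℝ × ℝ) 1,
            (v (c + t • y)) ^ 2 * (c + t • y).1 :=
          mul_le_mul_of_nonneg_left hmono2 (by positivity)
      _ = ∫ p in Metric.closedBall c t, (v p) ^ 2 * p.1 := hcov.symm
      _ ≤ ∫ p in K, (v p) ^ 2 * p.1 := hmono1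
  -- final arithmetic
  set C : ℝ := 128 * σ ^ 4 * (1 + 2 * σ) * C₀ with hCdef
  have hCpos : 0 < C := by positivity
  have hbase : (t⁻¹) ^ 2 * (C₀ * G) * (c.1 + h) * (4 * h ^ 2)
      ≤ C / h ^ 2 * (t ^ 2 * (c.1 / 2 * G)) := by
    have hh4 : h ^ 4 ≤ 16 * σ ^ 4 * t ^ 4 := by
      have := pow_le_pow_left₀ hhpos.le hht 4
      nlinarith [this]
    have hch : c.1 + h ≤ (1 + 2 * σ) * c.1 := by nlinarith [hht, hct, hσ, ht]
    have hkey : 4 * C₀ * ((c.1 + h) * h ^ 4) ≤ C * (t ^ 4 * c.1) / 2 := by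
      have hprod : (c.1 + h) * h ^ 4 ≤ ((1 + 2 * σ) * c.1) * (16 * σ ^ 4 * t ^ 4) := by
        apply mul_le_mul hch hh4 (by positivity) (by positivity)
      have := mul_le_mul_of_nonneg_left hprod (by positivity : (0:ℝ) ≤ 4 * C₀)
      calc 4 * C₀ * ((c.1 + h) * h ^ 4)
          ≤ 4 * C₀ * (((1 + 2 * σ) * c.1) * (16 * σ ^ 4 * t ^ 4)) := this
        _ = C * (t ^ 4 * c.1) / 2 := by rw [hCdef]; ring
    have hb1 : (t⁻¹) ^ 2 * C₀ * (c.1 + h) * (4 * h ^ 2)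
        = (4 * C₀ * ((c.1 + h) * h ^ 4)) / (t ^ 2 * h ^ 2) := by
      field_simp
    have hb2 : C / h ^ 2 * (t ^ 2 * (c.1 / 2))
        = (C * (t ^ 4 * c.1) / 2) / (t ^ 2 * h ^ 2) := by
      field_simp
    have hbase0 : (t⁻¹) ^ 2 * C₀ * (c.1 + h) * (4 * h ^ 2)
        ≤ C / h ^ 2 * (t ^ 2 * (c.1 / 2)) := by
      rw [hb1, hb2]
      exact div_le_div_of_nonneg_right hkey (by positivity)
    have := mul_le_mul_of_nonneg_right hbase0 hGnn
    calc (t⁻¹) ^ 2 * (C₀ * G) * (c.1 + h) * (4 * h ^ 2)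
        = ((t⁻¹) ^ 2 * C₀ * (c.1 + h) * (4 * h ^ 2)) * G := by ring
      _ ≤ (C / h ^ 2 * (t ^ 2 * (c.1 / 2))) * G := this
      _ = C / h ^ 2 * (t ^ 2 * (c.1 / 2 * G)) := by ring
  have hfinal : C / h ^ 2 * (t ^ 2 * (c.1 / 2 * G))
      ≤ C / h ^ 2 * ∫ p in K, (v p) ^ 2 * p.1 :=
    mul_le_mul_of_nonneg_left hRHS (by positivity)
  calc (∫ p in K, ((pdr v p) ^ 2 + (pdz v p) ^ 2) * p.1)
      ≤ (t⁻¹) ^ 2 * (C₀ * G) * (c.1 + h) * (4 * h ^ 2) := hLHS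
    _ ≤ C / h ^ 2 * (t ^ 2 * (c.1 / 2 * G)) := hbase
    _ ≤ C / h ^ 2 * ∫ p in K, (v p) ^ 2 * p.1 := hfinal
end
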